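/- arXiv:2202.03802 — 3 statements merged into one kernel-verified Lean document; each statement's English description precedes it below -/
import Mathlib

section
/- For a subset S ⊆ Δ, say that φ restricted to S is topologically free if for every n ≥ 1 the set {x ∈ X : x, φ(x), …, φⁿ⁻¹(x) all lie in S and φⁿ(x) = x} has empty interior in X. Then φ restricted to Δ_reg is topologically free if and only if φ restricted to Δ_pos is topologically free. -/
open scoped ZeroAtInfty

noncomputable section

variable {X : Type*} [TopologicalSpace X]

/-- The fibre of `φ : Δ → X` over `y`. -/
def Fiber (Δ : Set X) (φ : X → X) (y : X) : Set X := {x | x ∈ Δ ∧ φ x = y}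

/-- `ρ : Δ → [0,∞)` is a potential with bound `M`: it is nonnegative on `Δ`, the sums
`Σ_{x ∈ φ⁻¹(y)} ρ(x)` are (summable and) bounded by `M`, and for every `a ∈ C₀(Δ)` the
function `L(a)(y) = Σ_{x ∈ φ⁻¹(y)} ρ(x) a(x)` belongs to `C₀(X)`. -/
def IsPotential (Δ : Set X) (φ : X → X) (ρ : X → ℝ) (M : ℝ) : Prop :=
  (∀ x ∈ Δ, 0 ≤ ρ x) ∧
  (∀ y : X, Summable fun x : Fiber Δ φ y => ρ x.1) ∧
  (∀ y : X, (∑' x : Fiber Δ φ y, ρ x.1) ≤ M) ∧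
  ∀ a : C₀(X, ℂ), (∀ x ∉ Δ, a x = 0) →
    ∃ b : C₀(X, ℂ), ∀ y : X, b y = ∑' x : Fiber Δ φ y, (ρ x.1 : ℂ) * a x.1

/-- `Δ_pos`: the set of points of `Δ` where `ρ` is strictly positive. -/
def Dpos (Δ : Set X) (ρ : X → ℝ) : Set X := {x | x ∈ Δ ∧ 0 < ρ x}

/-- `Δ_reg`: the set of points of `Δ_pos` where `ρ` (as a function on `Δ`) is continuous. -/
def Dreg (Δ : Set X) (ρ : X → ℝ) : Set X :=
  {x | x ∈ Δ ∧ 0 < ρ x ∧ ContinuousWithinAt ρ Δ x}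

/-- `φ` restricted to `S` is topologically free: for every `n ≥ 1` the set of points `x` whose
first `n` iterates stay in `S` and with `φⁿ(x) = x` has empty interior in `X`. -/
def TopFreeOn (φ : X → X) (S : Set X) : Prop :=
  ∀ n : ℕ, 1 ≤ n → interior {x | (∀ k < n, φ^[k] x ∈ S) ∧ φ^[n] x = x} = ∅

open Filter Topology Set Function
set_option linter.unusedSectionVars false
set_option linter.unusedVariables false
set_option maxHeartbeats 1000000

section Aux
variable [LocallyCompactSpace X] [T2Space X] {Δ : Set X} {φ : X → X} {ρ : X → ℝ} {M : ℝ}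

lemma exists_bump {V : Set X} (hV : IsOpen V) {p : X} (hp : p ∈ V) :
    ∃ a : C(X, ℝ), HasCompactSupport a ∧ (∀ x, a x ∈ Icc (0:ℝ) 1) ∧
      (∀ᶠ x in 𝓝 p, a x = 1) ∧ (∀ x ∉ V, a x = 0) := by
  obtain ⟨K, hK, hpK, hKV⟩ := exists_compact_subset hV hp
  obtain ⟨f, hf1, hf0, hfc, hf01⟩ := exists_continuous_one_zero_of_isCompact hK
    (isClosed_compl_iff.2 hV) (Set.disjoint_left.mpr fun x hxK hxV => hxV (hKV hxK))
  refine ⟨f, hfc, hf01, ?_, fun x hx => hf0 hx⟩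
  filter_upwards [mem_interior_iff_mem_nhds.1 hpK] with x hx using hf1 hx

lemma toC0 {a : C(X, ℝ)} (ha : HasCompactSupport a) :
    ∃ ac : C₀(X, ℂ), ∀ x, ac x = (a x : ℂ) := by
  refine ⟨⟨⟨fun x => (a x : ℂ), Complex.continuous_ofReal.comp a.continuous⟩, ?_⟩, fun x => rfl⟩
  have h0 : ∀ᶠ x in cocompact X, ((a x : ℝ) : ℂ) = 0 := by
    filter_upwards [mem_cocompact.mpr ⟨tsupport a, ha, subset_rfl⟩] with x hx
    simp [image_eq_zero_of_notMem_tsupport hx]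
  have h0' : (fun x => ((a x : ℝ) : ℂ)) =ᶠ[cocompact X] fun _ => 0 := h0
  exact Tendsto.congr' h0'.symm tendsto_const_nhds

lemma summable_mul (hpot : IsPotential Δ φ ρ M) {a : X → ℝ} (h01 : ∀ x, a x ∈ Icc (0:ℝ) 1)
    (y : X) : Summable fun x : Fiber Δ φ y => ρ x.1 * a x.1 :=
  Summable.of_nonneg_of_le (fun x => mul_nonneg (hpot.1 _ x.2.1) (h01 _).1)
    (fun x => mul_le_of_le_one_right (hpot.1 _ x.2.1) (h01 _).2) (hpot.2.1 y)

lemma exists_transfer (hpot : IsPotential Δ φ ρ M) {a : C(X,ℝ)} (ha : HasCompactSupport a)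
    (haΔ : ∀ x ∉ Δ, a x = 0) :
    ∃ g : X → ℝ, Continuous g ∧ ∀ y, g y = ∑' x : Fiber Δ φ y, ρ x.1 * a x.1 := by
  obtain ⟨ac, hac⟩ := toC0 ha
  obtain ⟨b, hb⟩ := hpot.2.2.2 ac (fun x hx => by rw [hac, haΔ x hx]; simp)
  refine ⟨fun y => (b y).re, Complex.continuous_re.comp b.continuous, fun y => ?_⟩
  have : b y = ((∑' x : Fiber Δ φ y, ρ x.1 * a x.1 : ℝ) : ℂ) := by
    rw [hb y, Complex.ofReal_tsum]
    exact tsum_congr fun x => by rw [hac, Complex.ofReal_mul]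
  show (b y).re = _
  rw [this, Complex.ofReal_re]

lemma usc_rho (hΔ : IsOpen Δ) (hφ : ContinuousOn φ Δ) (hpot : IsPotential Δ φ ρ M)
    {p : X} (hp : p ∈ Δ) {ε : ℝ} (hε : 0 < ε) :
    ∀ᶠ x in 𝓝[Δ] p, ρ x < ρ p + ε := by
  classical
  have hρp : 0 ≤ ρ p := hpot.1 p hp
  have hsum : Summable fun x : Fiber Δ φ (φ p) => ρ x.1 := hpot.2.1 (φ p)
  have hp' : p ∈ Fiber Δ φ (φ p) := ⟨hp, rfl⟩
  have htail := (tendsto_order.1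
    (tendsto_tsum_compl_atTop_zero (fun x : Fiber Δ φ (φ p) => ρ x.1))).2 (ε/3) (by linarith)
  obtain ⟨s₀, hs₀⟩ := eventually_atTop.1 htail
  set G : Finset (Fiber Δ φ (φ p)) := insert ⟨p, hp'⟩ s₀ with hG
  have hGp : (⟨p, hp'⟩ : Fiber Δ φ (φ p)) ∈ G := Finset.mem_insert_self _ _
  have hGtail : (∑' x : {x : Fiber Δ φ (φ p) // x ∉ G}, ρ x.1.1) < ε/3 :=
    hs₀ G (Finset.subset_insert _ _)
  set W : Finset X := (G.image (fun x : Fiber Δ φ (φ p) => (x : X))).erase p with hW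
  set V : Set X := Δ \ (W : Set X) with hV
  have hVo : IsOpen V := hΔ.sdiff (W.finite_toSet.isClosed)
  have hpV : p ∈ V := ⟨hp, by simp [hW]⟩
  obtain ⟨a, hacs, ha01, haev1, haV0⟩ := exists_bump hVo hpV
  have hap : a p = 1 := haev1.self_of_nhds
  have haΔ : ∀ x ∉ Δ, a x = 0 := fun x hx => haV0 x (fun hxV => hx hxV.1)
  obtain ⟨g, hgc, hgy⟩ := exists_transfer hpot hacs haΔ
  have hfs : Summable fun x : Fiber Δ φ (φ p) => ρ x.1 * a x.1 := summable_mul hpot ha01 (φ p)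
  have key1 : g (φ p) < ρ p + ε/3 := by
    rw [hgy, ← Summable.sum_add_tsum_compl (s := G) hfs]
    have h1 : (∑ x ∈ G, ρ x.1 * a x.1) = ρ p := by
      rw [Finset.sum_eq_single (⟨p, hp'⟩ : Fiber Δ φ (φ p))]
      · simp [hap]
      · intro x hxG hxp
        have hxW : (x : X) ∈ (W : Set X) := by
          simp only [hW, Finset.coe_erase, Finset.mem_coe, Set.mem_diff, Set.mem_singleton_iff,
            Finset.mem_image]
          constructor
          · exact ⟨x, hxG, rfl⟩
          · exact fun h => hxp (Subtype.ext h)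
        rw [haV0 _ (fun hv => hv.2 hxW), mul_zero]
      · intro h; exact absurd hGp h
    have h2 : (∑' x : ↑((G : Set (Fiber Δ φ (φ p))))ᶜ, ρ x.1.1 * a x.1.1)
        ≤ ∑' x : {x : Fiber Δ φ (φ p) // x ∉ G}, ρ x.1.1 := by
      apply Summable.tsum_le_tsum _ (hfs.subtype _) (hsum.subtype _)
      intro x
      exact mul_le_of_le_one_right (hpot.1 _ x.1.2.1) (ha01 _).2
    rw [h1]
    linarith
  -- eventual bounds
  set B : ℝ := ρ p + ε/3 with hB
  have hBpos : 0 < B := by positivity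
  set θ : ℝ := B / (ρ p + ε) with hθ
  have hθpos : 0 < θ := by positivity
  have hθ1 : θ < 1 := by
    rw [hθ, div_lt_one (by positivity), hB]
    linarith
  have e1 : ∀ᶠ x in 𝓝[Δ] p, g (φ x) < B := by
    have hc : ContinuousWithinAt (fun x => g (φ x)) Δ p :=
      (hgc.continuousAt.comp_continuousWithinAt (hφ p hp))
    exact hc.eventually_lt_const key1
  have e2 : ∀ᶠ x in 𝓝[Δ] p, θ < a x := by
    have : Tendsto a (𝓝 p) (𝓝 1) := by
      have := a.continuous.tendsto p
      rwa [hap] at this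
    exact ((this.eventually_const_lt hθ1).filter_mono nhdsWithin_le_nhds)
  filter_upwards [e1, e2, self_mem_nhdsWithin] with x hx1 hx2 hxΔ
  have hle : ρ x * a x ≤ g (φ x) := by
    rw [hgy]
    exact Summable.le_tsum (summable_mul hpot ha01 (φ x)) (⟨x, hxΔ, rfl⟩ : Fiber Δ φ (φ x))
      (fun x' _ => mul_nonneg (hpot.1 _ x'.2.1) (ha01 _).1)
  have hρx : 0 ≤ ρ x := hpot.1 x hxΔ
  have h3 : ρ x * θ < B :=
    lt_of_le_of_lt (by nlinarith [hx2, hρx] : ρ x * θ ≤ ρ x * a x) (lt_of_le_of_lt hle hx1)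
  have hBθ : B / θ = ρ p + ε := by
    rw [hθ]
    field_simp
  calc ρ x < B / θ := (lt_div_iff₀ hθpos).2 h3
    _ = ρ p + ε := hBθ

lemma pullback_step (hΔ : IsOpen Δ) (hpot : IsPotential Δ φ ρ M) {c : X} {O : Set X}
    (hO : IsOpen O) (hOΔ : O ⊆ Δ) (hc : c ∈ O) (hρc : 0 < ρ c) :
    ∃ Y : Set X, IsOpen Y ∧ φ c ∈ Y ∧ ∀ y ∈ Y, ∃ u ∈ O, φ u = y := by
  obtain ⟨a, hacs, ha01, haev1, haV0⟩ := exists_bump hO hc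
  have haΔ : ∀ x ∉ Δ, a x = 0 := fun x hx => haV0 x (fun hxV => hx (hOΔ hxV))
  obtain ⟨g, hgc, hgy⟩ := exists_transfer hpot hacs haΔ
  have hcmem : c ∈ Fiber Δ φ (φ c) := ⟨hOΔ hc, rfl⟩
  have h1 : 0 < g (φ c) := by
    rw [hgy]
    have hle : ρ c * a c ≤ _ := Summable.le_tsum (summable_mul hpot ha01 (φ c))
      (⟨c, hcmem⟩ : Fiber Δ φ (φ c)) (fun x' _ => mul_nonneg (hpot.1 _ x'.2.1) (ha01 _).1)
    have hac : a c = 1 := haev1.self_of_nhds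
    nlinarith [hle]
  refine ⟨g ⁻¹' Ioi 0, (isOpen_Ioi).preimage hgc, h1, fun y hy => ?_⟩
  have hy' : 0 < g y := hy
  rw [hgy] at hy'
  by_contra hcon
  push_neg at hcon
  have hzero : ∀ x : Fiber Δ φ y, ρ x.1 * a x.1 = 0 := by
    intro x
    rcases eq_or_ne (a x.1) 0 with h | h
    · rw [h, mul_zero]
    · exact absurd x.2.2 (hcon x.1 (by_contra fun hxO => h (haV0 _ hxO)))
  rw [tsum_congr hzero, tsum_zero] at hy'
  exact lt_irrefl 0 hy'

lemma iterate_transfer (hpot : IsPotential Δ φ ρ M) {U : Set X}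
    (hiter : ∀ z ∈ U, ∀ j, φ^[j] z ∈ Dpos Δ ρ)
    (hinj : ∀ z ∈ U, ∀ w ∈ U, ∀ m : ℕ, φ^[m] z = φ^[m] w → z = w)
    {a : C₀(X, ℂ)} (ha : ∀ x, a x ≠ 0 → x ∈ U) (j : ℕ) :
    ∃ b : C₀(X, ℂ), (∀ w, b w ≠ 0 → ∃ z ∈ U, a z ≠ 0 ∧ w = φ^[j] z) ∧
      (∀ z ∈ U, b (φ^[j] z) = (∏ i ∈ Finset.range j, (ρ (φ^[i] z) : ℂ)) * a z) := by
  induction j with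
  | zero => exact ⟨a, fun w hw => ⟨w, ha w hw, hw, rfl⟩, fun z _ => by simp⟩
  | succ j ih =>
    obtain ⟨b, hbsupp, hbval⟩ := ih
    have hbΔ : ∀ x ∉ Δ, b x = 0 := by
      intro x hx
      by_contra hbx
      obtain ⟨z, hz, -, rfl⟩ := hbsupp x hbx
      exact hx (hiter z hz j).1
    obtain ⟨b', hb'⟩ := hpot.2.2.2 b hbΔ
    refine ⟨b', ?_, ?_⟩
    · intro w hw
      rw [hb' w] at hw
      have hex : ∃ x : Fiber Δ φ w, (ρ x.1 : ℂ) * b x.1 ≠ 0 := by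
        by_contra h
        push_neg at h
        rw [tsum_congr h, tsum_zero] at hw
        exact hw rfl
      obtain ⟨x, hx⟩ := hex
      have hbx : b x.1 ≠ 0 := fun h => hx (by rw [h, mul_zero])
      obtain ⟨z, hz, haz, hxz⟩ := hbsupp x.1 hbx
      exact ⟨z, hz, haz, by rw [Function.iterate_succ_apply', ← x.2.2, hxz]⟩
    · intro z hz
      rw [Function.iterate_succ_apply', hb' _]
      have hmem : (φ^[j] z) ∈ Fiber Δ φ (φ (φ^[j] z)) := ⟨(hiter z hz j).1, rfl⟩
      rw [tsum_eq_single (⟨φ^[j] z, hmem⟩ : Fiber Δ φ (φ (φ^[j] z))) ?_]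
      · show (ρ (φ^[j] z) : ℂ) * b (φ^[j] z) = _
        rw [hbval z hz, Finset.prod_range_succ]
        ring
      · intro x hx
        by_contra h
        have hbx : b x.1 ≠ 0 := fun h0 => h (by rw [h0, mul_zero])
        obtain ⟨z', hz', -, hxz'⟩ := hbsupp x.1 hbx
        have heq : φ^[j+1] z' = φ^[j+1] z := by
          rw [Function.iterate_succ_apply', ← hxz', x.2.2, Function.iterate_succ_apply']
        have hzz : z' = z := hinj z' hz' z hz (j+1) heq
        apply hx
        apply Subtype.ext
        rw [hxz', hzz]

lemma chain_lemma (hΔ : IsOpen Δ) (hpot : IsPotential Δ φ ρ M) {U : Set X} (hUo : IsOpen U)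
    (hiter : ∀ z ∈ U, ∀ j, φ^[j] z ∈ Dpos Δ ρ) (k : ℕ) :
    ∀ {x : X}, x ∈ U → ∀ N' ∈ 𝓝 x, ∃ W ∈ 𝓝 (φ^[k] x), ∀ y ∈ W, ∃ x' ∈ N', φ^[k] x' = y := by
  induction k with
  | zero => exact fun {x} _ N' hN' => ⟨N', hN', fun y hy => ⟨y, hy, rfl⟩⟩
  | succ k ih =>
    intro x hx N' hN'
    obtain ⟨W, hW, hWp⟩ := ih hx N' hN'
    have hc : φ^[k] x ∈ Dpos Δ ρ := hiter x hx k
    have hOo : IsOpen (interior W ∩ Δ) := isOpen_interior.inter hΔ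
    have hcO : φ^[k] x ∈ interior W ∩ Δ := ⟨mem_interior_iff_mem_nhds.2 hW, hc.1⟩
    obtain ⟨Y, hYo, hYm, hYp⟩ := pullback_step hΔ hpot hOo inter_subset_right hcO hc.2
    refine ⟨Y, hYo.mem_nhds (by rw [Function.iterate_succ_apply']; exact hYm), fun y hy => ?_⟩
    obtain ⟨u, huO, huy⟩ := hYp y hy
    obtain ⟨x', hx', hx'u⟩ := hWp u (interior_subset huO.1)
    exact ⟨x', hx', by rw [Function.iterate_succ_apply', hx'u, huy]⟩

end Aux

/-- `φ` restricted to `Δ_reg` is topologically free if and only if `φ`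
restricted to `Δ_pos` is topologically free. -/
theorem topFree_Dreg_iff_topFree_Dpos
    {X : Type*} [TopologicalSpace X] [LocallyCompactSpace X] [T2Space X]
    (Δ : Set X) (φ : X → X) (ρ : X → ℝ) (M : ℝ)
    (hΔ : IsOpen Δ) (hφ : ContinuousOn φ Δ)
    (hcount : ∀ y : X, (Fiber Δ φ y).Countable)
    (hpot : IsPotential Δ φ ρ M) :
    TopFreeOn φ (Dreg Δ ρ) ↔ TopFreeOn φ (Dpos Δ ρ) := by
  classical
  constructor
  · intro hreg n hn
    by_contra hne
    obtain ⟨x₀, hx₀⟩ := Set.nonempty_iff_ne_empty.2 hne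
    set P : Set X := {x | (∀ k < n, φ^[k] x ∈ Dpos Δ ρ) ∧ φ^[n] x = x} with hP
    set U : Set X := interior P with hU
    have hUo : IsOpen U := isOpen_interior
    have hUP : U ⊆ P := interior_subset
    have hpos : ∀ z ∈ U, ∀ k, k < n → φ^[k] z ∈ Dpos Δ ρ := fun z hz => (hUP hz).1
    have hper : ∀ z ∈ U, φ^[n] z = z := fun z hz => (hUP hz).2
    have hn0 : 0 < n := hn
    have hfixmul : ∀ z ∈ U, ∀ q : ℕ, φ^[n*q] z = z := by
      intro z hz q
      induction q with
      | zero => simp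
      | succ q ihq =>
        rw [Nat.mul_succ, Function.iterate_add_apply, hper z hz, ihq]
    have hiter : ∀ z ∈ U, ∀ j : ℕ, φ^[j] z ∈ Dpos Δ ρ := by
      intro z hz j
      have h1 : φ^[j] z = φ^[j % n] z := by
        conv_lhs => rw [← Nat.mod_add_div j n]
        rw [Function.iterate_add_apply, hfixmul z hz (j / n)]
      rw [h1]
      exact hpos z hz _ (Nat.mod_lt _ hn0)
    have hinj : ∀ z ∈ U, ∀ w ∈ U, ∀ m : ℕ, φ^[m] z = φ^[m] w → z = w := by
      intro z hz w hw m h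
      have hm : m ≤ n * (m+1) := le_trans (Nat.le_succ m) (Nat.le_mul_of_pos_left _ hn0)
      calc z = φ^[n*(m+1)] z := (hfixmul z hz (m+1)).symm
        _ = φ^[n*(m+1) - m] (φ^[m] z) := by
            rw [← Function.iterate_add_apply, Nat.sub_add_cancel hm]
        _ = φ^[n*(m+1) - m] (φ^[m] w) := by rw [h]
        _ = φ^[n*(m+1)] w := by rw [← Function.iterate_add_apply, Nat.sub_add_cancel hm]
        _ = w := hfixmul w hw (m+1)
    have hUΔ : U ⊆ Δ := by
      intro z hz
      have h0 := (hiter z hz 0).1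
      simpa using h0
    obtain ⟨a, hacs, ha01, haev1, haU0⟩ := exists_bump hUo hx₀
    obtain ⟨ac, hac⟩ := toC0 hacs
    have hacU : ∀ x, ac x ≠ 0 → x ∈ U := by
      intro x hx
      by_contra hxU
      rw [hac, haU0 x hxU] at hx
      simp at hx
    obtain ⟨bn, hbnsupp, hbnval⟩ := iterate_transfer hpot hiter hinj hacU n
    set f : ℕ → X → ℝ := fun j z => ρ (φ^[j] z) with hfdef
    set rn : X → ℝ := fun z => ∏ i ∈ Finset.range n, f i z with hrndef
    set N₀ : Set X := U ∩ interior {x | a x = 1} with hN₀def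
    have hN₀o : IsOpen N₀ := hUo.inter isOpen_interior
    have hx₀N₀ : x₀ ∈ N₀ := ⟨hx₀, mem_interior_iff_mem_nhds.2 haev1⟩
    have hN₀U : N₀ ⊆ U := inter_subset_left
    have hbn_eq : ∀ z ∈ N₀, bn z = (rn z : ℂ) := by
      intro z hz
      have h1 := hbnval z (hN₀U hz)
      rw [hper z (hN₀U hz)] at h1
      have ha1 : z ∈ {x : X | a x = 1} := interior_subset hz.2
      replace ha1 : a z = 1 := ha1
      rw [h1, hac, ha1]
      rw [Complex.ofReal_one, mul_one, hrndef]
      push_cast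
      rfl
    have hrn_cont : ∀ x ∈ N₀, ContinuousAt rn x := by
      intro x hx
      have hcb : ContinuousAt (fun z => (bn z).re) x :=
        (Complex.continuous_re.comp bn.continuous).continuousAt
      apply hcb.congr
      filter_upwards [hN₀o.mem_nhds hx] with z hz
      rw [hbn_eq z hz, Complex.ofReal_re]
    have hφCA : ∀ x ∈ U, ∀ j : ℕ, ContinuousAt (φ^[j]) x := by
      intro x hx j
      induction j with
      | zero => simpa using continuousAt_id
      | succ j ihj =>
        rw [Function.iterate_succ']
        exact ContinuousAt.comp (hφ.continuousAt (hΔ.mem_nhds (hiter x hx j).1)) ihj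
    have htendΔ : ∀ x ∈ U, ∀ j : ℕ, Tendsto (φ^[j]) (𝓝 x) (𝓝[Δ] (φ^[j] x)) := by
      intro x hx j
      rw [tendsto_nhdsWithin_iff]
      refine ⟨hφCA x hx j, ?_⟩
      have := (hφCA x hx j).preimage_mem_nhds (hΔ.mem_nhds (hiter x hx j).1)
      filter_upwards [this] with z hz using hz
    have husc : ∀ x ∈ U, ∀ j : ℕ, ∀ ε : ℝ, 0 < ε → ∀ᶠ z in 𝓝 x, f j z < f j x + ε := by
      intro x hx j ε hε
      exact (htendΔ x hx j).eventually (usc_rho hΔ hφ hpot (hiter x hx j).1 hε)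
    have hnonneg : ∀ x ∈ U, ∀ᶠ z in 𝓝 x, ∀ i ∈ Finset.range n, 0 ≤ f i z := by
      intro x hx
      rw [Filter.eventually_all_finset]
      intro i _
      filter_upwards [(hφCA x hx i).preimage_mem_nhds (hΔ.mem_nhds (hiter x hx i).1)] with z hz
      exact hpot.1 _ hz
    have hfpos : ∀ x ∈ U, ∀ i : ℕ, 0 < f i x := fun x hx i => (hiter x hx i).2
    have hf_cont : ∀ x ∈ N₀, ∀ k, k < n → ContinuousAt (f k) x := by
      intro x hx k hk
      have hxU := hN₀U hx
      rw [ContinuousAt, tendsto_order]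
      constructor
      · intro q hq
        rcases lt_or_ge q 0 with hq0 | hq0
        · filter_upwards [hnonneg x hxU] with z hz
          exact lt_of_lt_of_le hq0 (hz k (Finset.mem_range.2 hk))
        · set D : ℝ → ℝ := fun t => ∏ i ∈ (Finset.range n).erase k, (f i x + t) with hDdef
          have hDcont : Continuous D := by
            apply continuous_finset_prod
            intro i _
            exact continuous_const.add continuous_id
          set G : ℝ → ℝ := fun t => (rn x - t) / D t with hGdef
          have hD0 : D 0 = ∏ i ∈ (Finset.range n).erase k, f i x := by
            rw [hDdef]; simp
          have hD0pos : 0 < D 0 := by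
            rw [hD0]
            exact Finset.prod_pos fun i _ => hfpos x hxU i
          have hrnx : rn x = f k x * D 0 := by
            rw [hD0, hrndef]
            exact (Finset.mul_prod_erase _ _ (Finset.mem_range.2 hk)).symm
          have hG0 : G 0 = f k x := by
            rw [hGdef]
            simp only [sub_zero]
            rw [hrnx, mul_div_cancel_right₀ _ (ne_of_gt hD0pos)]
          have hGc : ContinuousAt G 0 := by
            rw [hGdef]
            exact ((continuous_const.sub continuous_id).continuousAt).div
              hDcont.continuousAt (ne_of_gt hD0pos)
          have hGev : ∀ᶠ t in 𝓝 (0:ℝ), q < G t := by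
            apply (tendsto_order.1 hGc).1
            rw [hG0]; exact hq
          obtain ⟨δ, hδpos, hδ⟩ := Metric.eventually_nhds_iff.1 hGev
          have htpos : 0 < δ/2 := by positivity
          have hqGt : q < G (δ/2) := by
            apply hδ
            rw [Real.dist_eq, sub_zero, abs_of_pos htpos]
            linarith
          have hDtpos : 0 < D (δ/2) := by
            rw [hDdef]
            exact Finset.prod_pos fun i _ => by have := hfpos x hxU i; linarith
          have e1 : ∀ᶠ z in 𝓝 x, ∀ i ∈ Finset.range n, f i z < f i x + δ/2 := by
            rw [Filter.eventually_all_finset]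
            intro i _
            exact husc x hxU i (δ/2) htpos
          have e3 : ∀ᶠ z in 𝓝 x, rn x - δ/2 < rn z :=
            (tendsto_order.1 (hrn_cont x hx)).1 _ (by linarith)
          filter_upwards [e1, hnonneg x hxU, e3] with z hz1 hz2 hz3
          have hprod : rn z = f k z * ∏ i ∈ (Finset.range n).erase k, f i z := by
            rw [hrndef]
            exact (Finset.mul_prod_erase _ _ (Finset.mem_range.2 hk)).symm
          have hle : (∏ i ∈ (Finset.range n).erase k, f i z) ≤ D (δ/2) := by
            rw [hDdef]
            apply Finset.prod_le_prod
            · intro i hi; exact hz2 i (Finset.mem_of_mem_erase hi)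
            · intro i hi; exact le_of_lt (hz1 i (Finset.mem_of_mem_erase hi))
          have hfkz : 0 ≤ f k z := hz2 k (Finset.mem_range.2 hk)
          have h5 : rn x - δ/2 < f k z * D (δ/2) := by
            calc rn x - δ/2 < rn z := hz3
              _ = f k z * ∏ i ∈ (Finset.range n).erase k, f i z := hprod
              _ ≤ f k z * D (δ/2) := mul_le_mul_of_nonneg_left hle hfkz
          have h6 : G (δ/2) < f k z := by
            rw [hGdef]
            exact (div_lt_iff₀ hDtpos).2 (by linarith)
          exact lt_trans hqGt h6
      · intro q hq
        filter_upwards [husc x hxU k (q - f k x) (by linarith)] with z hz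
        linarith
    have hsub : N₀ ⊆ {x | (∀ k < n, φ^[k] x ∈ Dreg Δ ρ) ∧ φ^[n] x = x} := by
      intro x hx
      have hxU := hN₀U hx
      refine ⟨fun k hk => ?_, hper x hxU⟩
      have hmem := hpos x hxU k hk
      refine ⟨hmem.1, hmem.2, ?_⟩
      have key : ∀ ε : ℝ, 0 < ε → ∀ᶠ y in 𝓝 (φ^[k] x), |ρ y - ρ (φ^[k] x)| < ε := by
        intro ε hε
        have hfc := hf_cont x hx k hk
        have hN' : {z | |f k z - f k x| < ε} ∈ 𝓝 x := by
          have h7 := Metric.tendsto_nhds.1 hfc ε hε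
          have h8 : ∀ᶠ z in 𝓝 x, |f k z - f k x| < ε := by simpa [Real.dist_eq] using h7
          exact h8
        obtain ⟨W, hW, hWp⟩ := chain_lemma hΔ hpot hUo hiter k hxU _ hN'
        filter_upwards [hW] with y hy
        obtain ⟨x', hx', hx'y⟩ := hWp y hy
        have hρy : ρ y = f k x' := by rw [← hx'y]
        rw [hρy]
        exact hx'
      rw [ContinuousWithinAt, Metric.tendsto_nhds]
      intro ε hε
      apply Filter.Eventually.filter_mono nhdsWithin_le_nhds
      filter_upwards [key ε hε] with y hy
      rw [Real.dist_eq]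
      exact hy
    have hfin : x₀ ∈ interior {x | (∀ k < n, φ^[k] x ∈ Dreg Δ ρ) ∧ φ^[n] x = x} :=
      mem_interior.2 ⟨N₀, hsub, hN₀o, hx₀N₀⟩
    rw [hreg n hn] at hfin
    exact hfin
  · intro hposfree n hn
    have hsub : {x | (∀ k < n, φ^[k] x ∈ Dreg Δ ρ) ∧ φ^[n] x = x}
        ⊆ {x | (∀ k < n, φ^[k] x ∈ Dpos Δ ρ) ∧ φ^[n] x = x} :=
      fun x hx => ⟨fun k hk => ⟨(hx.1 k hk).1, (hx.1 k hk).2.1⟩, hx.2⟩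
    have h := interior_mono hsub
    rw [hposfree n hn] at h
    exact subset_empty_iff.1 h
end
end

section
/- Let U ⊆ X be an open set. Then: (1) φ(U ∩ Δ_pos) ⊆ U if and only if for every a ∈ C₀(Δ) vanishing on X ∖ U, the function L(a) vanishes on X ∖ U; (2) φ⁻¹(U) ∩ Δ_reg ⊆ U if and only if every nonnegative a ∈ C_c(Δ_reg) such that L(a) vanishes on X ∖ U itself vanishes on X ∖ U. -/
open scoped ZeroAtInfty

noncomputable section

variable {X : Type*} [TopologicalSpace X]

section Helpers

open Set Filter Topology

set_option linter.unusedSectionVars false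

/-- Bump function helper: in a LCH space, given an open set `V` and `x₀ ∈ V`, there is a
continuous `[0,1]`-valued compactly supported function equal to `1` on a neighbourhood of
`x₀` with closed support inside `V`. -/
lemma exists_bump_s18 [LocallyCompactSpace X] [T2Space X] {V : Set X} (hV : IsOpen V)
    {x₀ : X} (hx : x₀ ∈ V) :
    ∃ f : C(X, ℝ), HasCompactSupport ⇑f ∧ tsupport ⇑f ⊆ V ∧
      (∀ x, f x ∈ Set.Icc (0:ℝ) 1) ∧ ∃ W, IsOpen W ∧ x₀ ∈ W ∧ Set.EqOn (⇑f) 1 W := by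
  obtain ⟨K, hK, hxK, hKV⟩ := exists_compact_subset hV hx
  obtain ⟨K₂, hK₂, hxK₂, hK₂K⟩ := exists_compact_subset isOpen_interior hxK
  obtain ⟨f, hf1, hf0, hfc, hf01⟩ := exists_continuous_one_zero_of_isCompact hK₂
    isOpen_interior.isClosed_compl (disjoint_compl_right_iff_subset.mpr hK₂K)
  refine ⟨f, hfc, ?_, hf01, interior K₂, isOpen_interior, hxK₂, fun x hxi => hf1 (interior_subset hxi)⟩
  have hsupp : Function.support ⇑f ⊆ interior K := by
    intro x hxs
    by_contra hxn
    exact hxs (hf0 hxn)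
  calc tsupport ⇑f ⊆ closure (interior K) := closure_mono hsupp
    _ ⊆ K := closure_minimal interior_subset hK.isClosed
    _ ⊆ V := hKV

/-- Upgrade a compactly supported continuous real function to a `C₀` complex function. -/
lemma exists_c0 (f : C(X, ℝ)) (hf : HasCompactSupport ⇑f) :
    ∃ a : C₀(X, ℂ), ∀ x, a x = (f x : ℂ) := by
  have hcs : HasCompactSupport fun x => ((f x : ℂ)) := by
    exact hf.comp_left (g := fun t : ℝ => (t : ℂ)) Complex.ofReal_zero
  exact ⟨⟨⟨fun x => (f x : ℂ), Complex.continuous_ofReal.comp f.continuous⟩,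
    hcs.is_zero_at_infty⟩, fun x => rfl⟩

lemma summable_fiber_mul {Δ : Set X} {φ : X → X} {ρ : X → ℝ} {y : X}
    (hsum : Summable fun x : Fiber Δ φ y => ρ x.1)
    (hnn : ∀ x ∈ Δ, 0 ≤ ρ x) (r : X → ℝ) (C : ℝ)
    (h0 : ∀ x, 0 ≤ r x) (h1 : ∀ x, r x ≤ C) :
    Summable fun x : Fiber Δ φ y => ρ x.1 * r x.1 := by
  refine Summable.of_nonneg_of_le (fun x => mul_nonneg (hnn _ x.2.1) (h0 _))
    (fun x => ?_) (hsum.mul_right C)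
  exact mul_le_mul_of_nonneg_left (h1 _) (hnn _ x.2.1)

lemma tsum_fiber_ofReal {Δ : Set X} {φ : X → X} {ρ : X → ℝ} {y : X}
    (a : X → ℂ) (him : ∀ x, (a x).im = 0) :
    (∑' x : Fiber Δ φ y, (ρ x.1 : ℂ) * a x.1)
      = ((∑' x : Fiber Δ φ y, ρ x.1 * (a x.1).re : ℝ) : ℂ) := by
  rw [Complex.ofReal_tsum]
  refine tsum_congr fun x => ?_
  have : a x.1 = ((a x.1).re : ℂ) := Complex.ext rfl (by simp [him x.1])
  rw [Complex.ofReal_mul]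
  nth_rewrite 1 [this]
  rfl

/-- Key lemma: `Dreg` is open. -/
lemma exists_open_subset_Dreg [LocallyCompactSpace X] [T2Space X]
    {Δ : Set X} {φ : X → X} {ρ : X → ℝ} {M : ℝ}
    (hΔ : IsOpen Δ) (hφ : ContinuousOn φ Δ)
    (hpot : IsPotential Δ φ ρ M)
    {x₀ : X} (hx₀ : x₀ ∈ Dreg Δ ρ) :
    ∃ N, IsOpen N ∧ x₀ ∈ N ∧ N ⊆ Dreg Δ ρ := by
  obtain ⟨hx₀Δ, hc, hcont⟩ := hx₀
  obtain ⟨hnn, hsum, hbd, hL⟩ := hpot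
  set c := ρ x₀ with hcdef
  set y₀ := φ x₀ with hy₀
  have hΔnhds : Δ ∈ 𝓝 x₀ := hΔ.mem_nhds hx₀Δ
  have hca : ContinuousAt ρ x₀ := hcont.continuousAt hΔnhds
  -- Step 1: a neighbourhood `V₁` meeting the fibre of `y₀` only at `x₀`, on which `ρ > c/2`
  have hfin : {z : Fiber Δ φ y₀ | c/2 ≤ ρ z.1}.Finite := by
    have h := (hsum y₀).tendsto_cofinite_zero.eventually_lt_const (half_pos hc)
    rw [eventually_cofinite] at h
    convert h using 1
    ext z; simp [not_lt]
  have hSfin : (Subtype.val '' {z : Fiber Δ φ y₀ | c/2 ≤ ρ z.1} \ {x₀}).Finite :=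
    (hfin.image _).diff
  have hmemN₀ : {x | c/2 < ρ x} ∩ (Subtype.val '' {z : Fiber Δ φ y₀ | c/2 ≤ ρ z.1} \ {x₀})ᶜ ∩ Δ
      ∈ 𝓝 x₀ := by
    refine Filter.inter_mem (Filter.inter_mem ?_ ?_) hΔnhds
    · exact hca.eventually_const_lt (half_lt_self hc)
    · refine hSfin.isClosed.isOpen_compl.mem_nhds ?_
      simp
  obtain ⟨V₁, hV₁sub, hV₁open, hx₀V₁⟩ := mem_nhds_iff.mp hmemN₀
  have hV₁Δ : V₁ ⊆ Δ := fun x hx => (hV₁sub hx).2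
  have hV₁ρ : ∀ x ∈ V₁, c/2 < ρ x := fun x hx => (hV₁sub hx).1.1
  have hfib : ∀ z ∈ Fiber Δ φ y₀, z ∈ V₁ → z = x₀ := by
    intro z hz hzV
    have h1 := (hV₁sub hzV).1.1
    have h2 := (hV₁sub hzV).1.2
    by_contra hne
    exact h2 ⟨⟨⟨z, hz⟩, show c/2 ≤ ρ z from le_of_lt h1, rfl⟩, hne⟩
  -- Step 2: bump function
  obtain ⟨f, hfc, hfsupp, hf01, W, hWopen, hx₀W, hfW⟩ := exists_bump_s18 hV₁open hx₀V₁
  have hWsupp : W ⊆ tsupport ⇑f := fun x hx =>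
    subset_tsupport _ (by simp [Function.mem_support, hfW hx])
  have hWΔ : W ⊆ Δ := fun x hx => hV₁Δ (hfsupp (hWsupp hx))
  have hfx₀ : f x₀ = 1 := hfW hx₀W
  -- Step 3: the transfer operator applied to the bump
  obtain ⟨a, ha⟩ := exists_c0 f hfc
  have havanish : ∀ x ∉ Δ, a x = 0 := by
    intro x hx
    rw [ha]
    have : f x = 0 := image_eq_zero_of_notMem_tsupport (fun hmem => hx (hV₁Δ (hfsupp hmem)))
    simp [this]
  obtain ⟨b, hb⟩ := hL a havanish
  set g : X → ℝ := fun y => (b y).re with hgdef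
  have hg : Continuous g := Complex.continuous_re.comp (map_continuous b)
  have hgy : ∀ y, g y = ∑' x : Fiber Δ φ y, ρ x.1 * f x.1 := by
    intro y
    have him : ∀ x, (a x).im = 0 := fun x => by rw [ha]; exact Complex.ofReal_im _
    simp only [hgdef, hb y, tsum_fiber_ofReal a him, Complex.ofReal_re]
    exact tsum_congr fun x => by rw [ha]; simp
  have hsummul : ∀ y, Summable fun x : Fiber Δ φ y => ρ x.1 * f x.1 := fun y =>
    summable_fiber_mul (hsum y) hnn f 1 (fun x => (hf01 x).1) (fun x => (hf01 x).2)
  have hsingle : ∀ x' : X, ∀ hx' : x' ∈ Fiber Δ φ (φ x'),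
      (∀ z ∈ Fiber Δ φ (φ x'), z ∈ tsupport ⇑f → z = x') →
      g (φ x') = ρ x' * f x' := by
    intro x' hx' hz
    rw [hgy]
    refine tsum_eq_single (⟨x', hx'⟩ : Fiber Δ φ (φ x')) ?_
    intro z hzne
    rcases eq_or_ne (f z.1) 0 with h | h
    · simp [h]
    · exact absurd (Subtype.ext (hz z.1 z.2 (subset_tsupport _ h))) hzne
  have hgy₀ : g y₀ = c := by
    have := hsingle x₀ ⟨hx₀Δ, rfl⟩ (fun z hz hzsupp => hfib z hz (hfsupp hzsupp))
    rw [← hy₀] at this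
    rw [this, hfx₀, mul_one]
  -- Step 4: key claim: near x₀, fibres meet the support of f only in the base point
  have key : ∃ N, IsOpen N ∧ x₀ ∈ N ∧ N ⊆ W ∧
      ∀ x ∈ N, ∀ z ∈ Fiber Δ φ (φ x), z ∈ tsupport ⇑f → z = x := by
    by_contra hcon
    push_neg at hcon
    set B : Set X := {x | x ∈ W ∧ ∃ z, z ∈ Fiber Δ φ (φ x) ∧ z ∈ tsupport ⇑f ∧ z ≠ x}
      with hBdef
    have hBΔ : B ⊆ Δ := fun x hx => hWΔ hx.1
    have hclos : x₀ ∈ closure B := by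
      rw [mem_closure_iff]
      intro o ho hxo
      obtain ⟨x, hxN, z, hz1, hz2, hz3⟩ :=
        hcon (o ∩ W) (ho.inter hWopen) ⟨hxo, hx₀W⟩ inter_subset_right
      exact ⟨x, hxN.1, hxN.2, z, hz1, hz2, hz3⟩
    have hFne : (𝓝[B] x₀).NeBot := mem_closure_iff_nhdsWithin_neBot.mp hclos
    set F := 𝓝[B] x₀ with hFdef
    have hBF : B ∈ F := self_mem_nhdsWithin
    have hFx : F ≤ 𝓝 x₀ := nhdsWithin_le_nhds
    choose! ζ hζfib hζsupp hζne using fun (x : X) (hx : x ∈ B) => hx.2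
    have hmapK : map ζ F ≤ 𝓟 (tsupport ⇑f) := by
      rw [le_principal_iff, mem_map]
      exact mem_of_superset hBF fun x hx => hζsupp x hx
    haveI : (map ζ F).NeBot := hFne.map ζ
    obtain ⟨zs, hzsK, hzsclus⟩ := (hfc : IsCompact (tsupport ⇑f)).exists_clusterPt hmapK
    have hzsΔ : zs ∈ Δ := hV₁Δ (hfsupp hzsK)
    have hφF : Tendsto φ F (𝓝 y₀) := (hφ x₀ hx₀Δ).mono_left (nhdsWithin_mono x₀ hBΔ)
    have hφzs : φ zs = y₀ := by
      by_contra hne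
      obtain ⟨O₁, O₂, hO₁, hO₂, hm₁, hm₂, hdisj⟩ := t2_separation hne
      have s1 : φ ⁻¹' O₁ ∈ 𝓝 zs :=
        (hφ.continuousAt (hΔ.mem_nhds hzsΔ)) (hO₁.mem_nhds hm₁)
      have s2 : φ ⁻¹' O₂ ∈ map ζ F := by
        rw [mem_map]
        have h2 : ∀ᶠ x in F, φ x ∈ O₂ := hφF (hO₂.mem_nhds hm₂)
        filter_upwards [hBF, h2] with x hx hx2
        have : φ (ζ x) = φ x := (hζfib x hx).2
        simpa [Set.mem_preimage, this]
      have hne' : (𝓝 zs ⊓ map ζ F).NeBot := hzsclus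
      obtain ⟨w, hw1, hw2⟩ := hne'.nonempty_of_mem
        (inter_mem (mem_inf_of_left s1) (mem_inf_of_right s2))
      exact hdisj.ne_of_mem hw1 hw2 rfl
    have hzsx₀ : zs = x₀ := hfib zs ⟨hzsΔ, hφzs⟩ (hfsupp hzsK)
    rw [hzsx₀] at hzsclus
    -- refine to a filter along which both `id` and `ζ` tend to `x₀`
    have hH : (F ⊓ comap ζ (𝓝 x₀)).NeBot := by
      have h1 : (𝓝 x₀ ⊓ map ζ F).NeBot := hzsclus
      rw [inf_comm] at h1
      rw [← Filter.push_pull] at h1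
      exact (map_neBot_iff ζ).mp h1
    set H := F ⊓ comap ζ (𝓝 x₀) with hHdef
    haveI := hH
    have hHx : Tendsto (fun x : X => x) H (𝓝 x₀) := inf_le_left.trans hFx
    have hHζ : Tendsto ζ H (𝓝 x₀) := tendsto_iff_comap.mpr inf_le_right
    have hBH : B ∈ H := mem_inf_of_left hBF
    have hρ1 : Tendsto (fun x => ρ x) H (𝓝 c) := Filter.Tendsto.comp hca hHx
    have hρ2 : Tendsto (fun x => ρ (ζ x)) H (𝓝 c) := Filter.Tendsto.comp hca hHζ
    have hf1 : Tendsto (fun x => f x) H (𝓝 1) := by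
      rw [← hfx₀]
      exact ((map_continuous f).tendsto x₀).comp hHx
    have hf2 : Tendsto (fun x => f (ζ x)) H (𝓝 1) := by
      rw [← hfx₀]
      exact ((map_continuous f).tendsto x₀).comp hHζ
    have l1 : Tendsto (fun x => ρ x * f x + ρ (ζ x) * f (ζ x)) H (𝓝 (c * 1 + c * 1)) :=
      (hρ1.mul hf1).add (hρ2.mul hf2)
    have l2 : Tendsto (fun x => g (φ x)) H (𝓝 c) := by
      have hφH : Tendsto φ H (𝓝 y₀) := hφF.mono_left inf_le_left
      have := (hg.tendsto y₀).comp hφH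
      rwa [hgy₀] at this
    have lineq : ∀ᶠ x in H, ρ x * f x + ρ (ζ x) * f (ζ x) ≤ g (φ x) := by
      classical
      filter_upwards [hBH] with x hx
      rw [hgy (φ x)]
      have hxfib : x ∈ Fiber Δ φ (φ x) := ⟨hBΔ hx, rfl⟩
      set i : Fiber Δ φ (φ x) := ⟨x, hxfib⟩ with hidef
      set j : Fiber Δ φ (φ x) := ⟨ζ x, hζfib x hx⟩ with hjdef
      have hij : i ≠ j := fun h => (hζne x hx) (by
        have := congrArg Subtype.val h
        simpa [hidef, hjdef] using this.symm)
      have hsum2 : ρ x * f x + ρ (ζ x) * f (ζ x)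
          = ∑ k ∈ ({i, j} : Finset (Fiber Δ φ (φ x))), ρ k.1 * f k.1 := by
        rw [Finset.sum_pair hij]
      rw [hsum2]
      exact Summable.sum_le_tsum _ (fun k _ => mul_nonneg (hnn _ k.2.1) (hf01 k.1).1) (hsummul (φ x))
    have hle : c * 1 + c * 1 ≤ c := le_of_tendsto_of_tendsto l1 l2 lineq
    linarith
  -- Step 5: conclude
  obtain ⟨N, hNopen, hx₀N, hNW, hNkey⟩ := key
  have hNΔ : N ⊆ Δ := fun x hx => hWΔ (hNW hx)
  have hρeq : ∀ x' ∈ N, ρ x' = g (φ x') := by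
    intro x' hx'
    have := hsingle x' ⟨hNΔ hx', rfl⟩ (hNkey x' hx')
    rw [this, show f x' = 1 from hfW (hNW hx'), mul_one]
  refine ⟨N, hNopen, hx₀N, fun x hx => ?_⟩
  have hxΔ : x ∈ Δ := hNΔ hx
  have hxV₁ : x ∈ V₁ := hfsupp (hWsupp (hNW hx))
  refine ⟨hxΔ, lt_of_le_of_lt (by positivity) (hV₁ρ x hxV₁), ?_⟩
  have hcg : ContinuousAt (fun x' => g (φ x')) x :=
    (hg.continuousAt).comp (hφ.continuousAt (hΔ.mem_nhds hxΔ))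
  have heq : (fun x' => g (φ x')) =ᶠ[𝓝 x] ρ :=
    eventually_of_mem (hNopen.mem_nhds hx) fun x' hx' => (hρeq x' hx').symm
  exact (hcg.congr heq).continuousWithinAt

end Helpers

/-- For an open set `U ⊆ X`: (1) `U` is positively invariant
(`φ(U ∩ Δ_pos) ⊆ U`) iff `L` maps `C₀(U) ∩ C₀(Δ)` into `C₀(U)`; (2) `U` is negatively
invariant (`φ⁻¹(U) ∩ Δ_reg ⊆ U`) iff every nonnegative `a ∈ C_c(Δ_reg)` with `L(a)` vanishing
off `U` itself vanishes off `U`. -/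
theorem invariance_via_transfer_operator
    {X : Type*} [TopologicalSpace X] [LocallyCompactSpace X] [T2Space X]
    (Δ : Set X) (φ : X → X) (ρ : X → ℝ) (M : ℝ)
    (hΔ : IsOpen Δ) (hφ : ContinuousOn φ Δ)
    (hcount : ∀ y : X, (Fiber Δ φ y).Countable)
    (hpot : IsPotential Δ φ ρ M)
    (U : Set X) (hU : IsOpen U) :
    ((φ '' (U ∩ Dpos Δ ρ) ⊆ U) ↔
      ∀ a : C₀(X, ℂ), (∀ x ∉ Δ, a x = 0) → (∀ x ∉ U, a x = 0) →
        ∀ y ∉ U, (∑' x : Fiber Δ φ y, (ρ x.1 : ℂ) * a x.1) = 0) ∧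
    (({x | x ∈ Δ ∧ φ x ∈ U} ∩ Dreg Δ ρ ⊆ U) ↔
      ∀ a : C₀(X, ℂ), HasCompactSupport ⇑a → tsupport ⇑a ⊆ Dreg Δ ρ →
        (∀ x : X, (a x).im = 0 ∧ 0 ≤ (a x).re) →
        (∀ y ∉ U, (∑' x : Fiber Δ φ y, (ρ x.1 : ℂ) * a x.1) = 0) →
        ∀ x ∉ U, a x = 0) := by
  obtain ⟨hnn, hsum, hbd, hL⟩ := id hpot
  constructor
  · constructor
    · -- (1) ⇒
      intro hinv a haΔ haU y hy
      have hzero : ∀ x : Fiber Δ φ y, (ρ x.1 : ℂ) * a x.1 = 0 := by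
        intro x
        rcases eq_or_lt_of_le (hnn x.1 x.2.1) with h | h
        · rw [← h]; simp
        · by_cases hx : x.1 ∈ U
          · exact absurd (hinv ⟨x.1, ⟨hx, x.2.1, h⟩, x.2.2⟩) hy
          · rw [haU x.1 hx, mul_zero]
      rw [tsum_congr hzero, tsum_zero]
    · -- (1) ⇐
      intro h y hy
      obtain ⟨x, ⟨hxU, hxΔ, hxρ⟩, rfl⟩ := hy
      by_contra hyU
      obtain ⟨f, hfc, hfsupp, hf01, W, hWopen, hxW, hfW⟩ :=
        exists_bump_s18 (hU.inter hΔ) (Set.mem_inter hxU hxΔ)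
      obtain ⟨a, ha⟩ := exists_c0 f hfc
      have h1 : ∀ z ∉ Δ, a z = 0 := fun z hz => by
        rw [ha, image_eq_zero_of_notMem_tsupport (fun hm => hz (hfsupp hm).2)]
        simp
      have h2 : ∀ z ∉ U, a z = 0 := fun z hz => by
        rw [ha, image_eq_zero_of_notMem_tsupport (fun hm => hz (hfsupp hm).1)]
        simp
      have h3 := h a h1 h2 (φ x) hyU
      rw [tsum_fiber_ofReal a (fun z => by rw [ha]; exact Complex.ofReal_im _),
        Complex.ofReal_eq_zero] at h3
      have h3' : (∑' z : Fiber Δ φ (φ x), ρ z.1 * f z.1) = 0 := by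
        rw [← h3]
        exact tsum_congr fun z => by rw [ha]; simp
      have hsummul := summable_fiber_mul (hsum (φ x)) hnn f 1
        (fun z => (hf01 z).1) (fun z => (hf01 z).2)
      have hterm : ρ x * f x ≤ ∑' z : Fiber Δ φ (φ x), ρ z.1 * f z.1 :=
        Summable.le_tsum hsummul ⟨x, hxΔ, rfl⟩ fun b _ => mul_nonneg (hnn _ b.2.1) (hf01 _).1
      rw [show f x = 1 from hfW hxW, mul_one, h3'] at hterm
      exact absurd hterm (not_le.mpr hxρ)
  · constructor
    · -- (2) ⇒
      intro hinv a hac hasupp hpos hvan x₀ hx₀U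
      by_contra hax₀
      have hx₀supp : x₀ ∈ tsupport ⇑a := subset_tsupport _ hax₀
      have hx₀reg := hasupp hx₀supp
      obtain ⟨hx₀Δ, hρpos, -⟩ := hx₀reg
      have hφx₀ : φ x₀ ∉ U := fun hmem =>
        hx₀U (hinv ⟨⟨hx₀Δ, hmem⟩, hasupp hx₀supp⟩)
      have h3 := hvan (φ x₀) hφx₀
      rw [tsum_fiber_ofReal a (fun z => (hpos z).1), Complex.ofReal_eq_zero] at h3
      have hre_pos : 0 < (a x₀).re := by
        rcases lt_or_eq_of_le (hpos x₀).2 with h | h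
        · exact h
        · exact absurd (Complex.ext h.symm (hpos x₀).1) hax₀
      have hreC : HasCompactSupport fun x => (a x).re := hac.comp_left Complex.zero_re
      obtain ⟨C, hC⟩ := (Complex.continuous_re.comp (map_continuous a)).bounded_above_of_compact_support hreC
      have hsummul := summable_fiber_mul (hsum (φ x₀)) hnn (fun x => (a x).re) C
        (fun z => (hpos z).2) (fun z => le_trans (le_abs_self _) (by simpa [Real.norm_eq_abs] using hC z))
      have hterm : ρ x₀ * (a x₀).re ≤ ∑' z : Fiber Δ φ (φ x₀), ρ z.1 * (a z.1).re :=
        Summable.le_tsum hsummul ⟨x₀, hx₀Δ, rfl⟩ fun b _ => mul_nonneg (hnn _ b.2.1) (hpos _).2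
      rw [h3] at hterm
      nlinarith
    · -- (2) ⇐
      intro h x₀ hx₀mem
      obtain ⟨⟨hx₀Δ, hφU⟩, hx₀reg⟩ := hx₀mem
      by_contra hx₀U
      obtain ⟨N, hNopen, hx₀N, hNreg⟩ := exists_open_subset_Dreg hΔ hφ hpot hx₀reg
      have hopen2 : IsOpen (N ∩ (Δ ∩ φ ⁻¹' U)) :=
        hNopen.inter (hφ.isOpen_inter_preimage hΔ hU)
      obtain ⟨f, hfc, hfsupp, hf01, W, hWopen, hx₀W, hfW⟩ :=
        exists_bump_s18 hopen2 ⟨hx₀N, hx₀Δ, hφU⟩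
      obtain ⟨a, ha⟩ := exists_c0 f hfc
      have hcoe : ⇑a = fun x => ((f x : ℂ)) := funext ha
      have hsuppa : tsupport ⇑a ⊆ tsupport ⇑f := by
        apply closure_mono
        intro z hz
        simp only [Function.mem_support, hcoe] at hz ⊢
        exact fun h0 => hz (by rw [h0]; simp)
      have key := h a (by rw [hcoe]; exact hfc.comp_left Complex.ofReal_zero)
        (fun z hz => (hNreg ((hfsupp (hsuppa hz)).1)))
        (fun z => by rw [ha]; exact ⟨Complex.ofReal_im _, by simpa using (hf01 z).1⟩)
        ?_ x₀ hx₀U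
      · rw [ha] at key
        rw [show f x₀ = 1 from hfW hx₀W] at key
        simp at key
      · intro y hy
        have hzero : ∀ z : Fiber Δ φ y, (ρ z.1 : ℂ) * a z.1 = 0 := by
          intro z
          rcases eq_or_ne (f z.1) 0 with h0 | h0
          · rw [ha, h0]; simp
          · have hmem := hfsupp (subset_tsupport _ h0)
            exact absurd (show y ∈ U by rw [← z.2.2]; exact hmem.2.2) hy
        rw [tsum_congr hzero, tsum_zero]
end
end

section
/- Let (π, T) be a faithful representation of L on a Hilbert space H (π injective). Suppose V ⊆ X is a precompact open set which is contracting, i.e. there are pairwise disjoint nonempty open sets U_k ⊆ Δ_{reg,n_k} ∩ V for k = 1, …, m, with integers n_k ≥ 1, such that V is not contained in the closure of U₁ ∪ … ∪ U_m and the closure of V is contained in φ^{n₁}(U₁) ∪ … ∪ φ^{n_m}(U_m). Then there exist nonzero operators b, c ∈ B(H), with b = Σ_{k=1}^{m} π(√a_k) T^{n_k} for some nonnegative a_k ∈ C_c(U_k) and c = π(c₀) for some nonzero c₀ ∈ C_c(V ∖ closure(U₁ ∪ … ∪ U_m)), such that b* b b = b, b* b c = c, b* c = 0, and π(a) b = b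 for every a ∈ C₀(X) with a ≡ 1 on V. -/
open scoped ZeroAtInfty

noncomputable section
set_option linter.unusedSectionVars false
set_option maxHeartbeats 1000000

variable {X : Type*} [TopologicalSpace X]

/-- A representation `(π, T)` of the transfer operator `L` determined by `(Δ, φ, ρ)`:
`π` is a nondegenerate *-representation of `C₀(X)` and `T` satisfies
`π(L(a)) = T* π(a) T` for all `a ∈ C₀(Δ)`. -/
def IsRep (Δ : Set X) (φ : X → X) (ρ : X → ℝ) {H : Type*} [NormedAddCommGroup H]
    [InnerProductSpace ℂ H] [CompleteSpace H]
    (π : C₀(X, ℂ) →⋆ₙₐ[ℂ] (H →L[ℂ] H)) (T : H →L[ℂ] H) : Prop :=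
  Dense (↑(Submodule.span ℂ {v : H | ∃ (a : C₀(X, ℂ)) (h : H), π a h = v}) : Set H) ∧
  ∀ a b : C₀(X, ℂ), (∀ x ∉ Δ, a x = 0) →
    (∀ y : X, b y = ∑' x : Fiber Δ φ y, (ρ x.1 : ℂ) * a x.1) →
    π b = star T * π a * T

/-- `Δ_{reg,n}`: points whose first `n` iterates stay in `Δ_reg`. -/
def Dregn (Δ : Set X) (ρ : X → ℝ) (φ : X → X) (n : ℕ) : Set X :=
  {x | ∀ k < n, φ^[k] x ∈ Dreg Δ ρ}

namespace SEaux

/-- iterated domain of `φ` -/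
def Dn (Δ : Set X) (φ : X → X) : ℕ → Set X
  | 0 => Set.univ
  | n+1 => Δ ∩ {x | φ x ∈ Dn Δ φ n}

lemma mem_Dn_succ {Δ : Set X} {φ : X → X} {n : ℕ} {x : X} :
    x ∈ Dn Δ φ (n+1) ↔ x ∈ Δ ∧ φ x ∈ Dn Δ φ n := Iff.rfl

lemma Dn_succ_subset {Δ : Set X} {φ : X → X} {n : ℕ} : Dn Δ φ (n+1) ⊆ Δ :=
  Set.inter_subset_left

lemma mem_Dn {Δ : Set X} {φ : X → X} {n : ℕ} {x : X} :
    x ∈ Dn Δ φ n ↔ ∀ k < n, φ^[k] x ∈ Δ := by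
  induction n generalizing x with
  | zero => simp [Dn]
  | succ n ih =>
    rw [mem_Dn_succ, ih]
    constructor
    · rintro ⟨h0, h⟩ k hk
      cases k with
      | zero => simpa
      | succ k => rw [Function.iterate_succ_apply]; exact h k (by omega)
    · intro h
      refine ⟨by simpa using h 0 (by omega), fun k hk => ?_⟩
      rw [← Function.iterate_succ_apply]; exact h (k+1) (by omega)

lemma isOpen_Dn {Δ : Set X} {φ : X → X} (hΔ : IsOpen Δ) (hφ : ContinuousOn φ Δ) :
    ∀ n, IsOpen (Dn Δ φ n)
  | 0 => isOpen_univ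
  | n+1 => by
    have h := isOpen_Dn hΔ hφ n
    have := hφ.isOpen_inter_preimage hΔ h
    simpa [Dn, Set.preimage] using this

lemma continuousOn_iterate {Δ : Set X} {φ : X → X} (hφ : ContinuousOn φ Δ) :
    ∀ n, ContinuousOn (φ^[n]) (Dn Δ φ n)
  | 0 => by simpa using continuousOn_id
  | n+1 => by
    rw [Function.iterate_succ]
    exact (continuousOn_iterate hφ n).comp (hφ.mono Dn_succ_subset)
      (fun x hx => (mem_Dn_succ.mp hx).2)

lemma apply_norm_le (a : C₀(X, ℂ)) (x : X) : ‖a x‖ ≤ ‖a‖ := by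
  have := a.toBCF.norm_coe_le_norm x
  rwa [ZeroAtInftyContinuousMap.norm_toBCF_eq_norm] at this

variable {Δ : Set X} {φ : X → X} {ρ : X → ℝ} {M : ℝ}

lemma summable_aux (hpot : IsPotential Δ φ ρ M) (a : C₀(X, ℂ)) (y : X) :
    Summable fun x : Fiber Δ φ y => (ρ x.1 : ℂ) * a x.1 := by
  apply Summable.of_norm
  refine Summable.of_nonneg_of_le (fun x => norm_nonneg _) (fun x => ?_)
    ((hpot.2.1 y).mul_right ‖a‖)
  rw [norm_mul, Complex.norm_real, Real.norm_eq_abs,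
    abs_of_nonneg (hpot.1 _ x.2.1)]
  exact mul_le_mul_of_nonneg_left (apply_norm_le a x.1) (hpot.1 _ x.2.1)

lemma summable_re (hpot : IsPotential Δ φ ρ M) (a : C₀(X, ℂ)) (y : X) :
    Summable fun x : Fiber Δ φ y => ρ x.1 * (a x.1).re := by
  have h := (summable_aux hpot a y).map Complex.reAddGroupHom Complex.continuous_re
  have h2 : (⇑Complex.reAddGroupHom ∘ fun x : Fiber Δ φ y => ((ρ x.1 : ℂ) * a x.1)) =
      fun x : Fiber Δ φ y => ρ x.1 * (a x.1).re := by
    funext x; simp [Complex.reAddGroupHom, Complex.mul_re]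
  rwa [h2] at h

open Classical in
def Lmap (hpot : IsPotential Δ φ ρ M) (a : C₀(X, ℂ)) : C₀(X, ℂ) :=
  if h : ∀ x ∉ Δ, a x = 0 then (hpot.2.2.2 a h).choose else 0

lemma Lmap_apply (hpot : IsPotential Δ φ ρ M) {a : C₀(X, ℂ)} (h : ∀ x ∉ Δ, a x = 0)
    (y : X) : Lmap hpot a y = ∑' x : Fiber Δ φ y, (ρ x.1 : ℂ) * a x.1 := by
  rw [Lmap]; rw [dif_pos h]; exact (hpot.2.2.2 a h).choose_spec y

lemma Lmap_nonzero (hpot : IsPotential Δ φ ρ M) {a : C₀(X, ℂ)} (h : ∀ x ∉ Δ, a x = 0)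
    {y : X} (hy : Lmap hpot a y ≠ 0) : ∃ x, x ∈ Δ ∧ φ x = y ∧ a x ≠ 0 := by
  by_contra hc
  push_neg at hc
  apply hy
  rw [Lmap_apply hpot h]
  have h0 : ∀ x : Fiber Δ φ y, (ρ x.1 : ℂ) * a x.1 = 0 := fun x => by
    rw [hc x.1 x.2.1 x.2.2, mul_zero]
  rw [tsum_congr h0, tsum_zero]

lemma Lmap_real (hpot : IsPotential Δ φ ρ M) {a : C₀(X, ℂ)} (h : ∀ x ∉ Δ, a x = 0)
    (hre : ∀ x, (a x).im = 0 ∧ 0 ≤ (a x).re) (y : X) :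
    (Lmap hpot a y).im = 0 ∧ 0 ≤ (Lmap hpot a y).re ∧
      (Lmap hpot a y).re = ∑' x : Fiber Δ φ y, ρ x.1 * (a x.1).re := by
  have hsum := summable_aux hpot a y
  have hterm_re : ∀ x : Fiber Δ φ y, ((ρ x.1 : ℂ) * a x.1).re = ρ x.1 * (a x.1).re := by
    intro x; simp [Complex.mul_re]
  have hterm_im : ∀ x : Fiber Δ φ y, ((ρ x.1 : ℂ) * a x.1).im = 0 := by
    intro x; simp [Complex.mul_im, (hre x.1).1]
  have hre_eq : (Lmap hpot a y).re = ∑' x : Fiber Δ φ y, ρ x.1 * (a x.1).re := by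
    rw [Lmap_apply hpot h, Complex.re_tsum hsum, tsum_congr hterm_re]
  refine ⟨?_, ?_, hre_eq⟩
  · rw [Lmap_apply hpot h, Complex.im_tsum hsum, tsum_congr hterm_im, tsum_zero]
  · rw [hre_eq]
    exact tsum_nonneg fun x => mul_nonneg (hpot.1 _ x.2.1) (hre x.1).2

lemma Lmap_le (hpot : IsPotential Δ φ ρ M) {a : C₀(X, ℂ)} (h : ∀ x ∉ Δ, a x = 0)
    (hre : ∀ x, (a x).im = 0 ∧ 0 ≤ (a x).re) {x₀ : X} (hx₀ : x₀ ∈ Δ) :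
    ρ x₀ * (a x₀).re ≤ (Lmap hpot a (φ x₀)).re := by
  rw [(Lmap_real hpot h hre (φ x₀)).2.2]
  exact Summable.le_tsum (summable_re hpot a (φ x₀)) (⟨x₀, hx₀, rfl⟩ : Fiber Δ φ (φ x₀))
    (fun b _ => mul_nonneg (hpot.1 _ b.2.1) (hre b.1).2)

lemma Lmap_mul (hpot : IsPotential Δ φ ρ M) {a a' : C₀(X, ℂ)} (h : ∀ x ∉ Δ, a x = 0)
    (w : X → ℂ) (ha' : ∀ x, a' x = a x * w (φ x)) (y : X) :
    Lmap hpot a' y = Lmap hpot a y * w y := by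
  have h' : ∀ x ∉ Δ, a' x = 0 := fun x hx => by rw [ha', h x hx, zero_mul]
  rw [Lmap_apply hpot h', Lmap_apply hpot h, ← tsum_mul_right]
  exact tsum_congr fun x => by rw [ha' x.1, x.2.2]; ring

lemma Lmap_add (hpot : IsPotential Δ φ ρ M) {a b : C₀(X, ℂ)} (ha : ∀ x ∉ Δ, a x = 0)
    (hb : ∀ x ∉ Δ, b x = 0) : Lmap hpot (a + b) = Lmap hpot a + Lmap hpot b := by
  have hab : ∀ x ∉ Δ, (a + b) x = 0 := fun x hx => by
    rw [ZeroAtInftyContinuousMap.add_apply, ha x hx, hb x hx, add_zero]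
  refine ZeroAtInftyContinuousMap.ext fun y => ?_
  rw [ZeroAtInftyContinuousMap.add_apply, Lmap_apply hpot hab, Lmap_apply hpot ha,
    Lmap_apply hpot hb, ← Summable.tsum_add (summable_aux hpot a y) (summable_aux hpot b y)]
  exact tsum_congr fun x => by rw [ZeroAtInftyContinuousMap.add_apply]; ring

lemma Lmap_zero (hpot : IsPotential Δ φ ρ M) : Lmap hpot (0 : C₀(X, ℂ)) = 0 := by
  refine ZeroAtInftyContinuousMap.ext fun y => ?_
  rw [Lmap_apply hpot (fun x _ => rfl)]
  simp


def LmapIter (hpot : IsPotential Δ φ ρ M) (n : ℕ) (a : C₀(X, ℂ)) : C₀(X, ℂ) :=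
  (Lmap hpot)^[n] a

lemma LmapIter_succ (hpot : IsPotential Δ φ ρ M) (n : ℕ) (a : C₀(X, ℂ)) :
    LmapIter hpot (n+1) a = LmapIter hpot n (Lmap hpot a) := by
  rw [LmapIter, Function.iterate_succ_apply]; rfl

lemma vanish_of_supp {a : C₀(X, ℂ)} {n : ℕ}
    (ha : ∀ x, a x ≠ 0 → x ∈ Dn Δ φ (n+1)) : ∀ x ∉ Δ, a x = 0 := fun x hx => by
  by_contra h; exact hx (Dn_succ_subset (ha x h))

lemma supp_Lmap (hpot : IsPotential Δ φ ρ M) {a : C₀(X, ℂ)} {n : ℕ}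
    (ha : ∀ x, a x ≠ 0 → x ∈ Dn Δ φ (n+1)) :
    ∀ z, Lmap hpot a z ≠ 0 → z ∈ Dn Δ φ n := by
  intro z hz
  obtain ⟨x, hxΔ, hfx, hx0⟩ := Lmap_nonzero hpot (vanish_of_supp ha) hz
  have := (mem_Dn_succ.mp (ha x hx0)).2
  rwa [hfx] at this

lemma iter_rep {H : Type*} [NormedAddCommGroup H] [InnerProductSpace ℂ H] [CompleteSpace H]
    {π : C₀(X, ℂ) →⋆ₙₐ[ℂ] (H →L[ℂ] H)} {T : H →L[ℂ] H}
    (hpot : IsPotential Δ φ ρ M)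
    (hrep : ∀ a b : C₀(X, ℂ), (∀ x ∉ Δ, a x = 0) →
      (∀ y : X, b y = ∑' x : Fiber Δ φ y, (ρ x.1 : ℂ) * a x.1) →
      π b = star T * π a * T) :
    ∀ (n : ℕ) (a : C₀(X, ℂ)), (∀ x, a x ≠ 0 → x ∈ Dn Δ φ n) →
      π (LmapIter hpot n a) = (star T)^n * π a * T^n := by
  intro n
  induction n with
  | zero => intro a _; simp [LmapIter]
  | succ n ih =>
    intro a ha
    have hvan : ∀ x ∉ Δ, a x = 0 := vanish_of_supp ha
    have h1 : π (Lmap hpot a) = star T * π a * T :=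
      hrep a (Lmap hpot a) hvan (Lmap_apply hpot hvan)
    rw [LmapIter_succ, ih (Lmap hpot a) (supp_Lmap hpot ha), h1,
      pow_succ (star T) n, pow_succ' T n]
    simp only [mul_assoc]

lemma iter_supp (hpot : IsPotential Δ φ ρ M) :
    ∀ (n : ℕ) (a : C₀(X, ℂ)), (∀ x, a x ≠ 0 → x ∈ Dn Δ φ n) →
      ∀ y, LmapIter hpot n a y ≠ 0 → ∃ x, a x ≠ 0 ∧ φ^[n] x = y := by
  intro n
  induction n with
  | zero => intro a _ y hy; exact ⟨y, hy, rfl⟩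
  | succ n ih =>
    intro a ha y hy
    rw [LmapIter_succ] at hy
    obtain ⟨z, hz, hzy⟩ := ih (Lmap hpot a) (supp_Lmap hpot ha) y hy
    obtain ⟨x, _, hfx, hx0⟩ := Lmap_nonzero hpot (vanish_of_supp ha) hz
    exact ⟨x, hx0, by rw [Function.iterate_succ_apply, hfx, hzy]⟩

lemma iter_real (hpot : IsPotential Δ φ ρ M) :
    ∀ (n : ℕ) (a : C₀(X, ℂ)), (∀ x, a x ≠ 0 → x ∈ Dn Δ φ n) →
      (∀ x, (a x).im = 0 ∧ 0 ≤ (a x).re) →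
      ∀ y, (LmapIter hpot n a y).im = 0 ∧ 0 ≤ (LmapIter hpot n a y).re := by
  intro n
  induction n with
  | zero => intro a _ hre y; exact hre y
  | succ n ih =>
    intro a ha hre y
    rw [LmapIter_succ]
    refine ih (Lmap hpot a) (supp_Lmap hpot ha) (fun x => ?_) y
    have := Lmap_real hpot (vanish_of_supp ha) hre x
    exact ⟨this.1, this.2.1⟩

lemma iter_bound (hpot : IsPotential Δ φ ρ M) :
    ∀ (n : ℕ) (a : C₀(X, ℂ)), (∀ x, a x ≠ 0 → x ∈ Dn Δ φ n) →
      (∀ x, (a x).im = 0 ∧ 0 ≤ (a x).re) →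
      ∀ x, x ∈ Dn Δ φ n →
      (∏ j ∈ Finset.range n, ρ (φ^[j] x)) * (a x).re ≤ (LmapIter hpot n a (φ^[n] x)).re := by
  intro n
  induction n with
  | zero => intro a _ _ x _; simp [LmapIter]
  | succ n ih =>
    intro a ha hre x hx
    obtain ⟨hxΔ, hfx⟩ := mem_Dn_succ.mp hx
    have hvan := vanish_of_supp ha
    have hre' : ∀ z, ((Lmap hpot a) z).im = 0 ∧ 0 ≤ ((Lmap hpot a) z).re := fun z => by
      have := Lmap_real hpot hvan hre z; exact ⟨this.1, this.2.1⟩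
    have step : ρ x * (a x).re ≤ (Lmap hpot a (φ x)).re := Lmap_le hpot hvan hre hxΔ
    have IH := ih (Lmap hpot a) (supp_Lmap hpot ha) hre' (φ x) hfx
    have hprodnn : 0 ≤ ∏ j ∈ Finset.range n, ρ (φ^[j] (φ x)) := by
      refine Finset.prod_nonneg fun j hj => hpot.1 _ ?_
      exact mem_Dn.mp hfx j (Finset.mem_range.mp hj)
    calc (∏ j ∈ Finset.range (n+1), ρ (φ^[j] x)) * (a x).re
        = (∏ j ∈ Finset.range n, ρ (φ^[j] (φ x))) * (ρ x * (a x).re) := by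
          rw [Finset.prod_range_succ']
          simp only [Function.iterate_succ_apply, Function.iterate_zero_apply]
          ring
      _ ≤ (∏ j ∈ Finset.range n, ρ (φ^[j] (φ x))) * (Lmap hpot a (φ x)).re :=
          mul_le_mul_of_nonneg_left step hprodnn
      _ ≤ (LmapIter hpot n (Lmap hpot a) (φ^[n] (φ x))).re := IH
      _ = (LmapIter hpot (n+1) a (φ^[n+1] x)).re := by
          rw [LmapIter_succ, Function.iterate_succ_apply]

lemma iter_mul (hpot : IsPotential Δ φ ρ M) :
    ∀ (n : ℕ) (a a' : C₀(X, ℂ)), (∀ x, a x ≠ 0 → x ∈ Dn Δ φ n) →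
      ∀ (u : X → ℂ), (∀ x, a' x = a x * u (φ^[n] x)) →
      ∀ y, LmapIter hpot n a' y = LmapIter hpot n a y * u y := by
  intro n
  induction n with
  | zero => intro a a' _ u ha' y; simpa [LmapIter] using ha' y
  | succ n ih =>
    intro a a' ha u ha' y
    have hvan := vanish_of_supp ha
    have key : ∀ z, Lmap hpot a' z = Lmap hpot a z * u (φ^[n] z) := by
      intro z
      refine Lmap_mul hpot hvan (fun z => u (φ^[n] z)) (fun x => ?_) z
      rw [ha' x, Function.iterate_succ_apply]
    rw [LmapIter_succ, LmapIter_succ]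
    exact ih (Lmap hpot a) (Lmap hpot a') (supp_Lmap hpot ha) u key y

lemma iter_add (hpot : IsPotential Δ φ ρ M) :
    ∀ (n : ℕ) (a b : C₀(X, ℂ)), (∀ x, a x ≠ 0 → x ∈ Dn Δ φ n) →
      (∀ x, b x ≠ 0 → x ∈ Dn Δ φ n) →
      LmapIter hpot n (a + b) = LmapIter hpot n a + LmapIter hpot n b := by
  intro n
  induction n with
  | zero => intro a b _ _; rfl
  | succ n ih =>
    intro a b ha hb
    rw [LmapIter_succ, LmapIter_succ, LmapIter_succ,
      Lmap_add hpot (vanish_of_supp ha) (vanish_of_supp hb)]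
    exact ih _ _ (supp_Lmap hpot ha) (supp_Lmap hpot hb)

lemma iter_zero (hpot : IsPotential Δ φ ρ M) (n : ℕ) :
    LmapIter hpot n (0 : C₀(X, ℂ)) = 0 := by
  induction n with
  | zero => rfl
  | succ n ih => rw [LmapIter_succ, Lmap_zero hpot]; exact ih

lemma sum_apply {ι : Type*} (s : Finset ι) (f : ι → C₀(X, ℂ)) (x : X) :
    (∑ i ∈ s, f i) x = ∑ i ∈ s, f i x := by
  classical
  induction s using Finset.induction_on with
  | empty => rfl
  | insert _ _ h ih =>
    rw [Finset.sum_insert h, Finset.sum_insert h, ZeroAtInftyContinuousMap.add_apply, ih]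

lemma iter_sum (hpot : IsPotential Δ φ ρ M) {ι : Type*} (s : Finset ι)
    (f : ι → C₀(X, ℂ)) (n : ℕ) (hf : ∀ i ∈ s, ∀ x, f i x ≠ 0 → x ∈ Dn Δ φ n) :
    LmapIter hpot n (∑ i ∈ s, f i) = ∑ i ∈ s, LmapIter hpot n (f i) := by
  classical
  induction s using Finset.induction_on with
  | empty => simpa using iter_zero hpot n
  | @insert i s h ih =>
    rw [Finset.sum_insert h, Finset.sum_insert h,
      iter_add hpot n _ _ (hf i (Finset.mem_insert_self i s))
        (fun x hx => ?_), ih (fun j hj => hf j (Finset.mem_insert_of_mem hj))]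
    rw [sum_apply] at hx
    obtain ⟨j, hj, hj0⟩ : ∃ j ∈ s, f j x ≠ 0 := by
      by_contra hc; push_neg at hc
      exact hx (Finset.sum_eq_zero hc)
    exact hf j (Finset.mem_insert_of_mem hj) x hj0


lemma urysohn [LocallyCompactSpace X] [T2Space X] {s Ω : Set X}
    (hs : IsCompact s) (hΩ : IsOpen Ω) (hsΩ : s ⊆ Ω) :
    ∃ f : C(X, ℝ), Set.EqOn ⇑f 1 s ∧ HasCompactSupport ⇑f ∧ tsupport ⇑f ⊆ Ω ∧
      ∀ x, 0 ≤ f x := by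
  obtain ⟨k, _, hkc, hsk, hkΩ⟩ := exists_compact_closed_between hs hΩ hsΩ
  obtain ⟨f, hf1, hf0, hfc, hficc⟩ := exists_continuous_one_zero_of_isCompact hs
    (isClosed_compl_iff.mpr isOpen_interior)
    (Set.disjoint_left.mpr fun x hx hx' => hx' (hsk hx))
  refine ⟨f, hf1, hfc, ?_, fun x => (hficc x).1⟩
  have hsupp : Function.support ⇑f ⊆ interior k := by
    intro x hx
    by_contra hxk
    exact hx (hf0 hxk)
  calc tsupport ⇑f ⊆ closure (interior k) := closure_mono hsupp
    _ ⊆ k := closure_minimal interior_subset hkc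
    _ ⊆ Ω := hkΩ

lemma ofReal_c0 (f : C(X, ℝ)) (hf : HasCompactSupport ⇑f) :
    ∃ p : C₀(X, ℂ), (∀ x, p x = (f x : ℂ)) ∧ HasCompactSupport ⇑p ∧
      tsupport ⇑p = tsupport ⇑f := by
  have hc : HasCompactSupport (fun x => (f x : ℂ)) := by
    have := hf.comp_left (g := fun r : ℝ => (r : ℂ)) (by simp)
    exact this
  refine ⟨⟨⟨fun x => (f x : ℂ), Complex.continuous_ofReal.comp f.continuous⟩,
    hc.is_zero_at_infty⟩, fun x => rfl, hc, ?_⟩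
  have h2 : Function.support (fun x => (f x : ℂ)) = Function.support ⇑f := by
    ext x; simp [Function.mem_support]
  show closure (Function.support (fun x => (f x : ℂ))) = tsupport ⇑f
  rw [h2]; rfl

lemma prod_ext {Ω : Set X} (hΩ : IsOpen Ω) {g : X → ℂ} (hg : ContinuousOn g Ω)
    (f : C₀(X, ℂ)) (hf : HasCompactSupport ⇑f) (hsupp : tsupport ⇑f ⊆ Ω) :
    ∃ p : C₀(X, ℂ), HasCompactSupport ⇑p ∧ (∀ x, p x ≠ 0 → f x ≠ 0) ∧
      (∀ x ∈ Ω, p x = f x * g x) ∧ (∀ x ∉ Ω, p x = 0) := by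
  classical
  set q : X → ℂ := fun x => if x ∈ Ω then f x * g x else 0 with hq
  have hq0 : ∀ x, f x = 0 → q x = 0 := by
    intro x hx
    by_cases h : x ∈ Ω <;> simp [q, h, hx]
  have hcont : Continuous q := by
    rw [continuous_iff_continuousAt]
    intro x
    by_cases hx : x ∈ Ω
    · have h1 : ContinuousAt (fun y => f y * g y) x :=
        ((map_continuous f).continuousAt).mul (hg.continuousAt (hΩ.mem_nhds hx))
      refine h1.congr ?_
      filter_upwards [hΩ.mem_nhds hx] with y hy
      simp [q, hy]
    · have hx' : x ∉ tsupport ⇑f := fun h => hx (hsupp h)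
      have : ContinuousAt (fun _ : X => (0 : ℂ)) x := continuousAt_const
      refine this.congr ?_
      filter_upwards [(isClosed_tsupport ⇑f).isOpen_compl.mem_nhds hx'] with y hy
      have := hq0 y (image_eq_zero_of_notMem_tsupport hy)
      exact this.symm
  have hqsupp : tsupport q ⊆ tsupport ⇑f := by
    refine closure_minimal ?_ (isClosed_tsupport _)
    intro x hx
    by_contra hc
    exact hx (hq0 x (image_eq_zero_of_notMem_tsupport hc))
  have hqc : HasCompactSupport q := IsCompact.of_isClosed_subset hf (isClosed_tsupport q) hqsupp
  refine ⟨⟨⟨q, hcont⟩, hqc.is_zero_at_infty⟩, hqc, ?_, ?_, ?_⟩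
  · intro x hx hfx
    exact hx (hq0 x hfx)
  · intro x hx; simp [q, hx]
  · intro x hx; simp [q, hx]

lemma sqrt_c0 (a : C₀(X, ℂ)) (ha : HasCompactSupport ⇑a) :
    ∃ s : C₀(X, ℂ), (∀ x, s x = (Real.sqrt ((a x).re) : ℂ)) ∧
      (∀ x, s x ≠ 0 → a x ≠ 0) := by
  have hc : HasCompactSupport (fun x => (Real.sqrt ((a x).re) : ℂ)) := by
    have := ha.comp_left (g := fun z : ℂ => (Real.sqrt z.re : ℂ)) (by simp)
    exact this
  refine ⟨⟨⟨fun x => (Real.sqrt ((a x).re) : ℂ),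
    Complex.continuous_ofReal.comp (Real.continuous_sqrt.comp
      (Complex.continuous_re.comp (map_continuous a)))⟩, hc.is_zero_at_infty⟩,
    fun x => rfl, ?_⟩
  intro x hx hax
  apply hx
  show (Real.sqrt ((a x).re) : ℂ) = 0
  rw [hax]
  simp

end SEaux

/-- Scaling elements from a contracting precompact open set: if `V` is a
precompact open contracting set, then there are nonzero elements `b = Σ_k π(√a_k) T^{n_k}`
(with `a_k ∈ C_c(U_k)` nonnegative) and `c = π(c₀)` with `c₀ ∈ C_c(V ∖ closure(⋃ U_k))`
nonzero, satisfying `b* b b = b`, `b* b c = c`, `b* c = 0`, and `π(a) b = b` for every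
`a ∈ C₀(X)` equal to `1` on `V`. -/
theorem scaling_elements
    {X : Type*} [TopologicalSpace X] [LocallyCompactSpace X] [T2Space X]
    (Δ : Set X) (φ : X → X) (ρ : X → ℝ) (M : ℝ)
    (hΔ : IsOpen Δ) (hφ : ContinuousOn φ Δ)
    (hcount : ∀ y : X, (Fiber Δ φ y).Countable)
    (hpot : IsPotential Δ φ ρ M)
    {H : Type*} [NormedAddCommGroup H] [InnerProductSpace ℂ H] [CompleteSpace H]
    (π : C₀(X, ℂ) →⋆ₙₐ[ℂ] (H →L[ℂ] H)) (T : H →L[ℂ] H)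
    (hrep : IsRep Δ φ ρ π T) (hfaith : Function.Injective ⇑π)
    (V : Set X) (hV : IsOpen V) (hVcpt : IsCompact (closure V))
    (m : ℕ) (nk : Fin m → ℕ) (hnk : ∀ k, 1 ≤ nk k)
    (U : Fin m → Set X) (hUopen : ∀ k, IsOpen (U k)) (hUne : ∀ k, (U k).Nonempty)
    (hUsub : ∀ k, U k ⊆ Dregn Δ ρ φ (nk k) ∩ V)
    (hUdisj : ∀ k l, k ≠ l → Disjoint (U k) (U l))
    (hVnotsub : ¬ V ⊆ closure (⋃ k, U k))
    (hVcover : closure V ⊆ ⋃ k, φ^[nk k] '' U k) :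
    ∃ (a : Fin m → C₀(X, ℂ)) (s : Fin m → C₀(X, ℂ)) (c₀ : C₀(X, ℂ)),
      (∀ k, HasCompactSupport ⇑(a k) ∧ tsupport ⇑(a k) ⊆ U k ∧
        ∀ x : X, (a k x).im = 0 ∧ 0 ≤ (a k x).re) ∧
      (∀ (k : Fin m) (x : X), s k x = (Real.sqrt ((a k x).re) : ℂ)) ∧
      HasCompactSupport ⇑c₀ ∧ tsupport ⇑c₀ ⊆ V \ closure (⋃ k, U k) ∧ c₀ ≠ 0 ∧
      ∃ b : H →L[ℂ] H, b = ∑ k : Fin m, π (s k) * T ^ nk k ∧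
        b ≠ 0 ∧ π c₀ ≠ 0 ∧
        star b * b * b = b ∧ star b * b * π c₀ = π c₀ ∧ star b * π c₀ = 0 ∧
        ∀ a' : C₀(X, ℂ), (∀ x ∈ V, a' x = 1) → π a' * b = b := by
  classical
  open SEaux in
  obtain ⟨v₀, hv₀V, hv₀c⟩ := Set.not_subset.mp hVnotsub
  have hVK : V ⊆ closure V := subset_closure
  have hUDn : ∀ k, U k ⊆ SEaux.Dn Δ φ (nk k) := fun k x hx =>
    SEaux.mem_Dn.mpr fun j hj => ((hUsub k hx).1 j hj).1
  have hUV : ∀ k, U k ⊆ V := fun k x hx => (hUsub k hx).2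
  have hDnopen : ∀ n, IsOpen (SEaux.Dn Δ φ n) := SEaux.isOpen_Dn hΔ hφ
  -- pointwise data
  have hpt : ∀ y ∈ closure V, ∃ (k : Fin m) (f : C₀(X, ℂ)),
      HasCompactSupport ⇑f ∧ tsupport ⇑f ⊆ U k ∧ (∀ x, (f x).im = 0 ∧ 0 ≤ (f x).re) ∧
      0 < (SEaux.LmapIter hpot (nk k) f y).re := by
    intro y hy
    obtain ⟨k, x, hxU, hxy⟩ := Set.mem_iUnion.mp (hVcover hy)
    obtain ⟨f₀, hf1, hf₀cs, hf₀ts, hf₀nn⟩ := SEaux.urysohn isCompact_singleton (hUopen k)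
      (Set.singleton_subset_iff.mpr hxU)
    obtain ⟨f, hfval, hfcs, hfts⟩ := SEaux.ofReal_c0 f₀ hf₀cs
    have hts : tsupport ⇑f ⊆ U k := hfts ▸ hf₀ts
    have hre : ∀ x, (f x).im = 0 ∧ 0 ≤ (f x).re := fun x => by
      rw [hfval]; exact ⟨Complex.ofReal_im _, by simpa using hf₀nn x⟩
    have hsc : ∀ z, f z ≠ 0 → z ∈ SEaux.Dn Δ φ (nk k) := fun z hz =>
      hUDn k (hts (subset_closure (Function.mem_support.mpr hz)))
    have hb := SEaux.iter_bound hpot (nk k) f hsc hre x (hUDn k hxU)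
    rw [hxy] at hb
    have hfx : (f x).re = 1 := by
      rw [hfval, hf1 (Set.mem_singleton x)]; simp
    have hppos : 0 < ∏ j ∈ Finset.range (nk k), ρ (φ^[j] x) :=
      Finset.prod_pos fun j hj => ((hUsub k hxU).1 j (Finset.mem_range.mp hj)).2.1
    refine ⟨k, f, hfcs, hts, hre, lt_of_lt_of_le ?_ hb⟩
    rw [hfx, mul_one]; exact hppos
  have hpt' : ∀ y : closure V, ∃ (k : Fin m) (f : C₀(X, ℂ)),
      HasCompactSupport ⇑f ∧ tsupport ⇑f ⊆ U k ∧ (∀ x, (f x).im = 0 ∧ 0 ≤ (f x).re) ∧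
      0 < (SEaux.LmapIter hpot (nk k) f y.1).re := fun y => hpt y.1 y.2
  choose kk ff hffcs hffts hffre hffpos using hpt'
  have hffsc : ∀ (y : closure V) (x : X), ff y x ≠ 0 → x ∈ SEaux.Dn Δ φ (nk (kk y)) :=
    fun y x hx => hUDn _ (hffts y (subset_closure (Function.mem_support.mpr hx)))
  -- finite subcover
  have hWopen : ∀ y : closure V,
      IsOpen {z | 0 < (SEaux.LmapIter hpot (nk (kk y)) (ff y) z).re} := fun y =>
    isOpen_lt continuous_const (Complex.continuous_re.comp (map_continuous _))
  obtain ⟨t, ht⟩ := hVcpt.elim_finite_subcover _ hWopen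
    (fun z hz => Set.mem_iUnion.mpr ⟨⟨z, hz⟩, hffpos ⟨z, hz⟩⟩)
  set h : C₀(X, ℂ) := ∑ y ∈ t, SEaux.LmapIter hpot (nk (kk y)) (ff y) with hh
  have hhre : ∀ z, (h z).im = 0 ∧ 0 ≤ (h z).re := by
    intro z
    rw [hh, SEaux.sum_apply]
    constructor
    · rw [Complex.im_sum]
      exact Finset.sum_eq_zero fun y _ =>
        (SEaux.iter_real hpot (nk (kk y)) (ff y) (hffsc y) (hffre y) z).1
    · rw [Complex.re_sum]
      exact Finset.sum_nonneg fun y _ =>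
        (SEaux.iter_real hpot (nk (kk y)) (ff y) (hffsc y) (hffre y) z).2
  have hhpos : ∀ z ∈ closure V, 0 < (h z).re := by
    intro z hz
    obtain ⟨y, hyt, hzy⟩ := Set.mem_iUnion₂.mp (ht hz)
    rw [hh, SEaux.sum_apply, Complex.re_sum]
    exact Finset.sum_pos'
      (fun y' _ => (SEaux.iter_real hpot (nk (kk y')) (ff y') (hffsc y') (hffre y') z).2)
      ⟨y, hyt, hzy⟩
  set Ω : Set X := {z | 0 < (h z).re} with hΩ
  have hΩopen : IsOpen Ω := isOpen_lt continuous_const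
    (Complex.continuous_re.comp (map_continuous h))
  have hKΩ : closure V ⊆ Ω := fun z hz => hhpos z hz
  -- the function u
  obtain ⟨w₀, hw₀1, hw₀cs, hw₀ts, hw₀nn⟩ := SEaux.urysohn hVcpt hΩopen hKΩ
  obtain ⟨w, hwval, hwcs, hwts⟩ := SEaux.ofReal_c0 w₀ hw₀cs
  have hwtsΩ : tsupport ⇑w ⊆ Ω := hwts ▸ hw₀ts
  have hinvcont : ContinuousOn (fun z => ((1 / (h z).re : ℝ) : ℂ)) Ω := by
    refine Complex.continuous_ofReal.comp_continuousOn ?_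
    exact ContinuousOn.div continuousOn_const
      ((Complex.continuous_re.comp (map_continuous h)).continuousOn)
      (fun z hz => ne_of_gt hz)
  obtain ⟨u, hucs, husupp, huval, hu0⟩ := SEaux.prod_ext hΩopen hinvcont w hwcs hwtsΩ
  have hure : ∀ z, (u z).im = 0 ∧ 0 ≤ (u z).re := by
    intro z
    by_cases hz : z ∈ Ω
    · rw [huval z hz, hwval z, ← Complex.ofReal_mul]
      refine ⟨Complex.ofReal_im _, ?_⟩
      rw [Complex.ofReal_re]
      have hzre : (0:ℝ) < (h z).re := hz
      exact mul_nonneg (hw₀nn z) (one_div_nonneg.mpr hzre.le)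
    · rw [hu0 z hz]; simp
  have hu1 : ∀ z ∈ closure V, h z * u z = 1 := by
    intro z hz
    have hzΩ : z ∈ Ω := hKΩ hz
    have hzre : (0:ℝ) < (h z).re := hzΩ
    have hhz : h z = ((h z).re : ℂ) := by
      apply Complex.ext
      · simp
      · rw [(hhre z).1]; simp
    have h1 : ((w₀ z : ℝ) : ℂ) = 1 := by rw [hw₀1 hz]; simp
    rw [hhz, huval z hzΩ, hwval z, h1, one_mul, ← Complex.ofReal_mul, mul_one_div,
      div_self (ne_of_gt hzre), Complex.ofReal_one]
  -- the functions g_k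
  set gg : Fin m → C₀(X, ℂ) := fun k => ∑ y ∈ t.filter (fun y => kk y = k), ff y with hgg
  have hggex : ∀ k x, gg k x ≠ 0 → ∃ y ∈ t.filter (fun y => kk y = k), ff y x ≠ 0 := by
    intro k x hx
    rw [hgg, SEaux.sum_apply] at hx
    by_contra hc; push_neg at hc
    exact hx (Finset.sum_eq_zero hc)
  have hggS : ∀ k, Function.support ⇑(gg k) ⊆
      ⋃ y ∈ t.filter (fun y => kk y = k), tsupport ⇑(ff y) := by
    intro k x hx
    obtain ⟨y, hy, hy0⟩ := hggex k x hx
    exact Set.mem_biUnion hy (subset_closure (Function.mem_support.mpr hy0))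
  have hSclosed : ∀ k, IsClosed (⋃ y ∈ t.filter (fun y => kk y = k), tsupport ⇑(ff y)) :=
    fun k => (t.filter (fun y => kk y = k)).finite_toSet.isClosed_biUnion
      fun y _ => isClosed_tsupport _
  have hggts : ∀ k, tsupport ⇑(gg k) ⊆ U k := by
    intro k
    refine (closure_minimal (hggS k) (hSclosed k)).trans ?_
    refine Set.iUnion₂_subset fun y hy => ?_
    have : kk y = k := (Finset.mem_filter.mp hy).2
    rw [← this]
    exact hffts y
  have hggcs : ∀ k, HasCompactSupport ⇑(gg k) := by
    intro k
    refine IsCompact.of_isClosed_subset ?_ (isClosed_tsupport _)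
      (closure_minimal (hggS k) (hSclosed k))
    exact (t.filter (fun y => kk y = k)).finite_toSet.isCompact_biUnion
      fun y _ => hffcs y
  have hggre : ∀ k x, (gg k x).im = 0 ∧ 0 ≤ (gg k x).re := by
    intro k x
    rw [hgg, SEaux.sum_apply]
    constructor
    · rw [Complex.im_sum]; exact Finset.sum_eq_zero fun y _ => (hffre y x).1
    · rw [Complex.re_sum]; exact Finset.sum_nonneg fun y _ => (hffre y x).2
  have hggsc : ∀ k x, gg k x ≠ 0 → x ∈ SEaux.Dn Δ φ (nk k) := fun k x hx =>
    hUDn k (hggts k (subset_closure (Function.mem_support.mpr hx)))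
  -- the functions a_k
  have hucont : ∀ k, ContinuousOn (fun x => u (φ^[nk k] x)) (SEaux.Dn Δ φ (nk k)) :=
    fun k => (map_continuous u).comp_continuousOn (SEaux.continuousOn_iterate hφ (nk k))
  have haex : ∀ k, ∃ p : C₀(X, ℂ), HasCompactSupport ⇑p ∧ (∀ x, p x ≠ 0 → gg k x ≠ 0) ∧
      (∀ x ∈ SEaux.Dn Δ φ (nk k), p x = gg k x * u (φ^[nk k] x)) ∧
      (∀ x ∉ SEaux.Dn Δ φ (nk k), p x = 0) := fun k =>
    SEaux.prod_ext (hDnopen (nk k)) (hucont k) (gg k) (hggcs k)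
      ((hggts k).trans (hUDn k))
  choose aa haacs haasupp haaval haa0 using haex
  have haall : ∀ k x, aa k x = gg k x * u (φ^[nk k] x) := by
    intro k x
    by_cases hx : x ∈ SEaux.Dn Δ φ (nk k)
    · exact haaval k x hx
    · rw [haa0 k x hx]
      have : gg k x = 0 := by
        by_contra hc; exact hx (hggsc k x hc)
      rw [this, zero_mul]
  have haare : ∀ k x, (aa k x).im = 0 ∧ 0 ≤ (aa k x).re := by
    intro k x
    rw [haall k x]
    constructor
    · rw [Complex.mul_im, (hggre k x).1, (hure _).1, mul_zero, zero_mul, add_zero]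
    · rw [Complex.mul_re, (hggre k x).1, (hure _).1, mul_zero, sub_zero]
      exact mul_nonneg (hggre k x).2 (hure _).2
  have haats : ∀ k, tsupport ⇑(aa k) ⊆ U k := by
    intro k
    refine (closure_minimal (fun x hx => ?_) (isClosed_tsupport ⇑(gg k))).trans (hggts k)
    exact subset_closure (Function.mem_support.mpr
      (haasupp k x (Function.mem_support.mp hx)))
  have haasc : ∀ k x, aa k x ≠ 0 → x ∈ SEaux.Dn Δ φ (nk k) := fun k x hx =>
    hUDn k (haats k (subset_closure (Function.mem_support.mpr hx)))
  -- the functions s_k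
  choose ss hssval hsssupp using fun k => SEaux.sqrt_c0 (aa k) (haacs k)
  have hssU : ∀ k x, ss k x ≠ 0 → x ∈ U k := fun k x hx =>
    haats k (subset_closure (Function.mem_support.mpr (hsssupp k x hx)))
  have hsssq : ∀ k, ss k * ss k = aa k := by
    intro k
    refine ZeroAtInftyContinuousMap.ext fun x => ?_
    rw [ZeroAtInftyContinuousMap.mul_apply, hssval k x, ← Complex.ofReal_mul,
      Real.mul_self_sqrt (haare k x).2]
    exact Complex.ext rfl (by rw [Complex.ofReal_im, (haare k x).1])
  have hssstar : ∀ k, star (ss k) = ss k := by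
    intro k
    refine ZeroAtInftyContinuousMap.ext fun x => ?_
    show star (ss k x) = ss k x
    rw [hssval k x]
    exact Complex.conj_ofReal _
  -- the function c₀
  obtain ⟨c', hc'1, hc'cs, hc'ts, hc'nn⟩ := SEaux.urysohn (isCompact_singleton (x := v₀))
    (hV.inter isClosed_closure.isOpen_compl)
    (Set.singleton_subset_iff.mpr ⟨hv₀V, hv₀c⟩)
  obtain ⟨c₀, hc₀val, hc₀cs, hc₀ts⟩ := SEaux.ofReal_c0 c' hc'cs
  have hc₀ts' : tsupport ⇑c₀ ⊆ V \ closure (⋃ k, U k) := by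
    rw [hc₀ts, Set.diff_eq]
    exact hc'ts
  have hc₀ne : c₀ ≠ 0 := by
    intro hc
    have h1 : c₀ v₀ = 1 := by
      rw [hc₀val, hc'1 (Set.mem_singleton v₀)]; simp
    rw [hc] at h1
    simp at h1
  have hc₀mem : ∀ x, c₀ x ≠ 0 → x ∈ V ∧ x ∉ closure (⋃ k, U k) := fun x hx =>
    hc₀ts' (subset_closure (Function.mem_support.mpr hx))
  -- the function e with π e = b* b
  set e : C₀(X, ℂ) := ∑ k : Fin m, SEaux.LmapIter hpot (nk k) (aa k) with he
  have he1 : ∀ z ∈ closure V, e z = 1 := by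
    intro z hz
    have step1 : ∀ k : Fin m, SEaux.LmapIter hpot (nk k) (aa k) z =
        SEaux.LmapIter hpot (nk k) (gg k) z * u z := fun k =>
      SEaux.iter_mul hpot (nk k) (gg k) (aa k) (hggsc k) u (haall k) z
    have step2 : ∀ k : Fin m, SEaux.LmapIter hpot (nk k) (gg k) =
        ∑ y ∈ t.filter (fun y => kk y = k), SEaux.LmapIter hpot (nk k) (ff y) := by
      intro k
      refine SEaux.iter_sum hpot _ _ _ fun y hy x hx => ?_
      rw [← (Finset.mem_filter.mp hy).2]
      exact hffsc y x hx
    have step3 : ∑ k : Fin m, SEaux.LmapIter hpot (nk k) (gg k) z = h z := by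
      have : ∀ k : Fin m, SEaux.LmapIter hpot (nk k) (gg k) z =
          ∑ y ∈ t.filter (fun y => kk y = k), SEaux.LmapIter hpot (nk (kk y)) (ff y) z := by
        intro k
        rw [step2 k, SEaux.sum_apply]
        exact Finset.sum_congr rfl fun y hy => by rw [(Finset.mem_filter.mp hy).2]
      rw [Finset.sum_congr rfl fun k _ => this k, hh, SEaux.sum_apply]
      exact Finset.sum_fiberwise t (fun y => kk y)
        (fun y => SEaux.LmapIter hpot (nk (kk y)) (ff y) z)
    rw [he, SEaux.sum_apply, Finset.sum_congr rfl fun k _ => step1 k, ← Finset.sum_mul,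
      step3, hu1 z hz]
  -- pointwise multiplication identities
  have hesk : ∀ k, e * ss k = ss k := by
    intro k
    refine ZeroAtInftyContinuousMap.ext fun x => ?_
    rw [ZeroAtInftyContinuousMap.mul_apply]
    by_cases hx : ss k x = 0
    · rw [hx, mul_zero]
    · rw [he1 x (hVK (hUV k (hssU k x hx))), one_mul]
  have hec : e * c₀ = c₀ := by
    refine ZeroAtInftyContinuousMap.ext fun x => ?_
    rw [ZeroAtInftyContinuousMap.mul_apply]
    by_cases hx : c₀ x = 0
    · rw [hx, mul_zero]
    · rw [he1 x (hVK (hc₀mem x hx).1), one_mul]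
  have hskc : ∀ k, ss k * c₀ = 0 := by
    intro k
    refine ZeroAtInftyContinuousMap.ext fun x => ?_
    rw [ZeroAtInftyContinuousMap.mul_apply, ZeroAtInftyContinuousMap.zero_apply]
    by_cases hx : ss k x = 0
    · rw [hx, zero_mul]
    · by_cases hc : c₀ x = 0
      · rw [hc, mul_zero]
      · exact absurd (subset_closure (Set.mem_iUnion.mpr ⟨k, hssU k x hx⟩))
          (hc₀mem x hc).2
  have hskl : ∀ k l : Fin m, l ≠ k → ss k * ss l = 0 := by
    intro k l hlk
    refine ZeroAtInftyContinuousMap.ext fun x => ?_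
    rw [ZeroAtInftyContinuousMap.mul_apply, ZeroAtInftyContinuousMap.zero_apply]
    by_cases hx : ss k x = 0
    · rw [hx, zero_mul]
    · by_cases hl : ss l x = 0
      · rw [hl, mul_zero]
      · exact absurd (hssU l x hl)
          (Set.disjoint_left.mp (hUdisj k l (Ne.symm hlk)) (hssU k x hx))
  -- the operator b
  set b : H →L[ℂ] H := ∑ k : Fin m, π (ss k) * T ^ nk k with hb
  have hstarb : star b = ∑ k : Fin m, (star T) ^ nk k * π (ss k) := by
    rw [hb, star_sum]
    refine Finset.sum_congr rfl fun k _ => ?_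
    rw [star_mul, star_pow, ← map_star, hssstar k]
  have hbb : star b * b = π e := by
    rw [hstarb, hb, Finset.sum_mul_sum]
    rw [he, map_sum]
    refine Finset.sum_congr rfl fun k _ => ?_
    rw [Finset.sum_eq_single k]
    · rw [SEaux.iter_rep hpot hrep.2 (nk k) (aa k) (haasc k), ← hsssq k, map_mul]
      simp only [mul_assoc]
    · intro l _ hlk
      have : π (ss k) * π (ss l) = 0 := by
        rw [← map_mul, hskl k l hlk, map_zero]
      calc (star T) ^ nk k * π (ss k) * (π (ss l) * T ^ nk l)
          = (star T) ^ nk k * (π (ss k) * π (ss l)) * T ^ nk l := by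
            simp only [mul_assoc]
        _ = 0 := by rw [this, mul_zero, zero_mul]
    · intro hk; exact absurd (Finset.mem_univ k) hk
  have hbne : b ≠ 0 := by
    intro hb0
    have h0 : π e = 0 := by rw [← hbb, hb0, mul_zero]
    have : e = 0 := hfaith (by rw [h0, map_zero])
    have h1 := he1 v₀ (hVK hv₀V)
    rw [this] at h1
    simp at h1
  have hπc₀ : π c₀ ≠ 0 := by
    intro hc
    exact hc₀ne (hfaith (by rw [hc, map_zero]))
  refine ⟨aa, ss, c₀, fun k => ⟨haacs k, haats k, haare k⟩, fun k x => hssval k x,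
    hc₀cs, hc₀ts', hc₀ne, b, hb, hbne, hπc₀, ?_, ?_, ?_, ?_⟩
  · -- b* b b = b
    rw [hbb]
    conv_lhs => rw [hb]
    rw [Finset.mul_sum]
    conv_rhs => rw [hb]
    refine Finset.sum_congr rfl fun k _ => ?_
    rw [← mul_assoc, ← map_mul, hesk k]
  · -- b* b (π c₀) = π c₀
    rw [hbb, ← map_mul, hec]
  · -- b* (π c₀) = 0
    rw [hstarb, Finset.sum_mul]
    refine Finset.sum_eq_zero fun k _ => ?_
    rw [mul_assoc, ← map_mul, hskc k, map_zero, mul_zero]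
  · -- π a' * b = b
    intro a' ha'
    have : ∀ k, a' * ss k = ss k := by
      intro k
      refine ZeroAtInftyContinuousMap.ext fun x => ?_
      rw [ZeroAtInftyContinuousMap.mul_apply]
      by_cases hx : ss k x = 0
      · rw [hx, mul_zero]
      · rw [ha' x (hUV k (hssU k x hx)), one_mul]
    conv_lhs => rw [hb]
    rw [Finset.mul_sum]
    conv_rhs => rw [hb]
    refine Finset.sum_congr rfl fun k _ => ?_
    rw [← mul_assoc, ← map_mul, this k]
end
end
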